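/- arXiv:2503.09530 — 7 statements merged into one kernel-verified Lean document; each statement's English description precedes it below -/
import Mathlib

section
/- The sequence defined by δ₁ = n and δ_{t+1} = (1 - 1/(n-t+1))·(δ_t - 1) for t = 1,…,n has the closed form δ_t = (n+1-t)·(1 + H_{n+1-t} - H_n) for all t ∈ [n], where H_k denotes the k-th harmonic number. -/
/-- The sequence δ₁ = n, δ_{t+1} = (1 - 1/(n-t+1))·(δ_t - 1) has closed form
    δ_t = (n+1-t)·(1 + H_{n+1-t} - H_n) for all t ∈ [n]. -/
theorem stmt_0 (n : ℕ) (hn : 1 ≤ n) (δ : ℕ → ℝ)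
    (hδ1 : δ 1 = n)
    (hrec : ∀ t, 1 ≤ t → t ≤ n →
      δ (t + 1) = (1 - 1 / ((n : ℝ) - t + 1)) * (δ t - 1)) :
    ∀ t, 1 ≤ t → t ≤ n →
      δ t = ((n : ℝ) + 1 - t) *
        (1 + (∑ ℓ ∈ Finset.Icc 1 (n + 1 - t), (1 : ℝ) / ℓ)
           - (∑ ℓ ∈ Finset.Icc 1 n, (1 : ℝ) / ℓ)) := by
  intro t ht1
  induction t, ht1 using Nat.le_induction with
  | base =>
    intro _
    have h : n + 1 - 1 = n := by omega
    rw [hδ1, h]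
    push_cast
    ring
  | succ k hk ih =>
    intro hkn
    have hk' : k ≤ n := by omega
    have hδk := ih hk'
    rw [hrec k hk hk', hδk]
    have h1 : n + 1 - k = (n - k) + 1 := by omega
    have h2 : n + 1 - (k + 1) = n - k := by omega
    rw [h1, h2, Finset.sum_Icc_succ_top (by omega : 1 ≤ n - k + 1)]
    have hc : ((n - k : ℕ) : ℝ) = (n : ℝ) - k := by
      push_cast [Nat.cast_sub hk']; ring
    have hck : (k : ℝ) ≤ n := by exact_mod_cast hk'
    have hlt : (k : ℝ) < n := by exact_mod_cast (by omega : k < n)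
    have hne : (n : ℝ) - k + 1 ≠ 0 := by nlinarith
    have hne2 : ((n - k : ℕ) : ℝ) + 1 ≠ 0 := by rw [hc]; exact hne
    push_cast [hc]
    field_simp
    ring
end

section
/- For the death process (Y_t), setting δ_t = E[Y_t] and α_t = Pr[Y_t ≥ 1], the expectations satisfy δ₁ = n and δ_{t+1} = (1 - 1/(n-t+1))·(δ_t - α_t) for all t ∈ [n]. -/
open MeasureTheory Finset

lemma nat_integral_eq_sum {Ω : Type*} [MeasurableSpace Ω] (μ : Measure Ω)
    [IsFiniteMeasure μ] (f : Ω → ℕ) (hf : Measurable f) (N : ℕ)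
    (hN : ∀ ω, f ω ≤ N) :
    ∫ ω, (f ω : ℝ) ∂μ
      = ∑ y ∈ Finset.range (N + 1), (y : ℝ) * (μ {ω | f ω = y}).toReal := by
  have hms : ∀ y : ℕ, MeasurableSet {ω | f ω = y} := fun y =>
    hf (measurableSet_singleton y)
  have hpt : ∀ ω, (f ω : ℝ)
      = ∑ y ∈ Finset.range (N + 1),
          Set.indicator {ω | f ω = y} (fun _ => (y : ℝ)) ω := by
    intro ω
    rw [Finset.sum_congr rfl (fun y _ => Set.indicator_apply _ _ _)]
    simp only [Set.mem_setOf_eq]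
    rw [Finset.sum_ite_eq (Finset.range (N + 1)) (f ω) (fun y => (y : ℝ))]
    simp [Nat.lt_succ_of_le (hN ω)]
  calc ∫ ω, (f ω : ℝ) ∂μ
      = ∫ ω, ∑ y ∈ Finset.range (N + 1),
          Set.indicator {ω | f ω = y} (fun _ => (y : ℝ)) ω ∂μ := by
        simp_rw [← hpt]
    _ = ∑ y ∈ Finset.range (N + 1),
          ∫ ω, Set.indicator {ω | f ω = y} (fun _ => (y : ℝ)) ω ∂μ :=
        integral_finset_sum _ (fun y _ => (integrable_const _).indicator (hms y))
    _ = ∑ y ∈ Finset.range (N + 1), (y : ℝ) * (μ {ω | f ω = y}).toReal := by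
        refine Finset.sum_congr rfl fun y _ => ?_
        rw [integral_indicator_const _ (hms y), smul_eq_mul, mul_comm]
        rfl

lemma nat_prob_ge_one {Ω : Type*} [MeasurableSpace Ω] (μ : Measure Ω)
    [IsFiniteMeasure μ] (f : Ω → ℕ) (hf : Measurable f) (N : ℕ)
    (hN : ∀ ω, f ω ≤ N) :
    (μ {ω | 1 ≤ f ω}).toReal = ∑ y ∈ Finset.Icc 1 N, (μ {ω | f ω = y}).toReal := by
  have hms : ∀ y : ℕ, MeasurableSet {ω | f ω = y} := fun y =>
    hf (measurableSet_singleton y)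
  have hset : {ω | 1 ≤ f ω} = ⋃ y ∈ Finset.Icc 1 N, {ω | f ω = y} := by
    ext ω
    simp only [Set.mem_setOf_eq, Set.mem_iUnion, Finset.mem_Icc, exists_prop]
    constructor
    · intro h; exact ⟨f ω, ⟨h, hN ω⟩, rfl⟩
    · rintro ⟨y, ⟨hy, _⟩, rfl⟩; exact hy
  have hdisj : Set.PairwiseDisjoint (↑(Finset.Icc 1 N)) (fun y => {ω | f ω = y}) := by
    intro a _ b _ hab
    refine Set.disjoint_left.mpr ?_
    intro ω ha hb
    exact hab (ha.symm.trans hb)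
  rw [hset, measure_biUnion_finset hdisj (fun y _ => hms y),
    ENNReal.toReal_sum (fun y _ => measure_ne_top μ _)]

/-- For the death process, δ_t = E[Y_t] and α_t = Pr[Y_t ≥ 1] satisfy
    δ₁ = n and δ_{t+1} = (1 - 1/(n-t+1))·(δ_t - α_t) for all t ∈ [n]. -/
theorem stmt_7 {Ω : Type*} [MeasurableSpace Ω] (μ : MeasureTheory.Measure Ω)
    [MeasureTheory.IsProbabilityMeasure μ]
    (n : ℕ) (hn : 1 ≤ n) (Y : ℕ → Ω → ℕ)
    (hmeas : ∀ t, Measurable (Y t))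
    (hY1 : ∀ ω, Y 1 ω = n)
    (hstep : ∀ ω, ∀ t, 1 ≤ t → t ≤ n →
      (1 ≤ Y t ω → Y (t + 1) ω = Y t ω - 1 ∨ Y (t + 1) ω = Y t ω - 2) ∧
      (Y t ω = 0 → Y (t + 1) ω = 0))
    (hprob2 : ∀ t y, 1 ≤ t → t ≤ n → 2 ≤ y →
      μ {ω | Y t ω = y ∧ Y (t + 1) ω = y - 2} =
        ENNReal.ofReal (((y : ℝ) - 1) / ((n : ℝ) - t + 1)) * μ {ω | Y t ω = y})
    (hprob1 : ∀ t y, 1 ≤ t → t ≤ n → 1 ≤ y →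
      μ {ω | Y t ω = y ∧ Y (t + 1) ω = y - 1} =
        ENNReal.ofReal (1 - ((y : ℝ) - 1) / ((n : ℝ) - t + 1)) * μ {ω | Y t ω = y}) :
    (∫ ω, ((Y 1 ω : ℝ)) ∂μ) = n ∧
    ∀ t, 1 ≤ t → t ≤ n →
      (∫ ω, ((Y (t + 1) ω : ℝ)) ∂μ) =
        (1 - 1 / ((n : ℝ) - t + 1)) *
          ((∫ ω, ((Y t ω : ℝ)) ∂μ) - (μ {ω | 1 ≤ Y t ω}).toReal) := by
  -- bound on the chain
  have hb : ∀ t, 1 ≤ t → t ≤ n + 1 → ∀ ω, Y t ω + t ≤ n + 1 := by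
    intro t
    induction t with
    | zero => omega
    | succ s ih =>
      intro _ hle ω
      rcases Nat.eq_zero_or_pos s with hs0 | hs1
      · subst hs0; simp [hY1]
      · have hsn : s ≤ n := by omega
        have hprev := ih hs1 (by omega) ω
        obtain ⟨h1, h0⟩ := hstep ω s hs1 hsn
        rcases Nat.eq_zero_or_pos (Y s ω) with hz | hp
        · have := h0 hz; omega
        · rcases h1 hp with h | h <;> omega
  refine ⟨?_, ?_⟩
  · simp only [hY1]
    rw [integral_const]
    simp
  · intro t ht1 htn
    have hYtn : ∀ ω, Y t ω ≤ n := fun ω => by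
      have := hb t ht1 (by omega) ω; omega
    have hYtb : ∀ ω, Y t ω ≤ n - t + 1 := fun ω => by
      have := hb t ht1 (by omega) ω; omega
    set A : ℕ → Set Ω := fun y => {ω | Y t ω = y ∧ Y (t + 1) ω = y - 1} with hA_def
    set B : ℕ → Set Ω := fun y => {ω | Y t ω = y ∧ Y (t + 1) ω = y - 2} with hB_def
    have hAms : ∀ y, MeasurableSet (A y) := fun y =>
      ((hmeas t) (measurableSet_singleton y)).inter
        ((hmeas (t + 1)) (measurableSet_singleton (y - 1)))
    have hBms : ∀ y, MeasurableSet (B y) := fun y =>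
      ((hmeas t) (measurableSet_singleton y)).inter
        ((hmeas (t + 1)) (measurableSet_singleton (y - 2)))
    have hdpos : (0 : ℝ) < (n : ℝ) - t + 1 := by
      have : (t : ℝ) ≤ (n : ℝ) := Nat.cast_le.mpr htn
      linarith
    -- pointwise decomposition of Y (t+1)
    have hpt : ∀ ω, ((Y (t + 1) ω : ℝ)) =
        ∑ y ∈ Finset.Icc 2 n,
          (Set.indicator (A y) (fun _ => (y : ℝ) - 1) ω
            + Set.indicator (B y) (fun _ => (y : ℝ) - 2) ω) := by
      intro ω
      obtain ⟨hs1, hs0⟩ := hstep ω t ht1 htn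
      by_cases h2 : 2 ≤ Y t ω
      · have hmem : Y t ω ∈ Finset.Icc 2 n := Finset.mem_Icc.mpr ⟨h2, hYtn ω⟩
        rw [Finset.sum_eq_single_of_mem (Y t ω) hmem ?side]
        case side =>
          intro y hy hne
          rw [Set.indicator_of_notMem (fun h => hne h.1.symm),
            Set.indicator_of_notMem (fun h => hne h.1.symm), add_zero]
        rcases hs1 (by omega) with h | h
        · rw [Set.indicator_of_mem (show ω ∈ A (Y t ω) from ⟨rfl, h⟩) (fun _ => (Y t ω : ℝ) - 1),
            Set.indicator_of_notMem (fun hc => by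
              have h1 := hc.2; omega), add_zero, h,
            Nat.cast_sub (by omega), Nat.cast_one]
        · rw [Set.indicator_of_notMem (fun hc => by
              have h1 := hc.2; omega),
            Set.indicator_of_mem (show ω ∈ B (Y t ω) from ⟨rfl, h⟩) (fun _ => (Y t ω : ℝ) - 2), zero_add, h,
            Nat.cast_sub (by omega), Nat.cast_ofNat]
      · have hz : Y (t + 1) ω = 0 := by
          rcases Nat.eq_zero_or_pos (Y t ω) with h | h
          · exact hs0 h
          · rcases hs1 h with hh | hh <;> omega
        rw [hz, Nat.cast_zero]
        symm
        apply Finset.sum_eq_zero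
        intro y hy
        have hne : Y t ω ≠ y := by
          have := (Finset.mem_Icc.mp hy).1; omega
        rw [Set.indicator_of_notMem (fun h => hne h.1),
          Set.indicator_of_notMem (fun h => hne h.1), add_zero]
    -- integral of Y (t+1)
    have hint : ∫ ω, ((Y (t + 1) ω : ℝ)) ∂μ
        = ∑ y ∈ Finset.Icc 2 n,
            (((y : ℝ) - 1) * (μ (A y)).toReal + ((y : ℝ) - 2) * (μ (B y)).toReal) := by
      calc ∫ ω, ((Y (t + 1) ω : ℝ)) ∂μ
          = ∫ ω, ∑ y ∈ Finset.Icc 2 n,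
              (Set.indicator (A y) (fun _ => (y : ℝ) - 1) ω
                + Set.indicator (B y) (fun _ => (y : ℝ) - 2) ω) ∂μ := by
            simp_rw [← hpt]
        _ = ∑ y ∈ Finset.Icc 2 n,
              ∫ ω, (Set.indicator (A y) (fun _ => (y : ℝ) - 1) ω
                + Set.indicator (B y) (fun _ => (y : ℝ) - 2) ω) ∂μ :=
            integral_finset_sum _ (fun y _ =>
              ((integrable_const _).indicator (hAms y)).add
                ((integrable_const _).indicator (hBms y)))
        _ = ∑ y ∈ Finset.Icc 2 n,
              (((y : ℝ) - 1) * (μ (A y)).toReal + ((y : ℝ) - 2) * (μ (B y)).toReal) := by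
            refine Finset.sum_congr rfl fun y _ => ?_
            rw [integral_add ((integrable_const _).indicator (hAms y))
                ((integrable_const _).indicator (hBms y)),
              integral_indicator_const _ (hAms y), integral_indicator_const _ (hBms y),
              smul_eq_mul, smul_eq_mul]
            simp only [measureReal_def]
            ring
    -- per-term evaluation
    have hterm : ∀ y ∈ Finset.Icc 2 n,
        ((y : ℝ) - 1) * (μ (A y)).toReal + ((y : ℝ) - 2) * (μ (B y)).toReal
          = (1 - 1 / ((n : ℝ) - t + 1)) *
              (((y : ℝ) - 1) * (μ {ω | Y t ω = y}).toReal) := by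
      intro y hy
      obtain ⟨hy2, hyn⟩ := Finset.mem_Icc.mp hy
      by_cases hle : y ≤ n - t + 1
      · have hy1R : (1 : ℝ) ≤ (y : ℝ) := by exact_mod_cast (by omega : 1 ≤ y)
        have hp0 : 0 ≤ ((y : ℝ) - 1) / ((n : ℝ) - t + 1) :=
          div_nonneg (by linarith) hdpos.le
        have hcast : (y : ℝ) ≤ (n : ℝ) - t + 1 := by
          have h1 : (y : ℝ) ≤ ((n - t + 1 : ℕ) : ℝ) := Nat.cast_le.mpr hle
          have h2 : ((n - t + 1 : ℕ) : ℝ) = (n : ℝ) - t + 1 := by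
            push_cast [Nat.cast_sub htn]; ring
          linarith [h1, h2.le, h2.ge]
        have hp1 : ((y : ℝ) - 1) / ((n : ℝ) - t + 1) ≤ 1 :=
          (div_le_one hdpos).mpr (by linarith)
        rw [hA_def, hB_def]
        simp only []
        rw [hprob1 t y ht1 htn (by omega), hprob2 t y ht1 htn hy2,
          ENNReal.toReal_mul, ENNReal.toReal_mul,
          ENNReal.toReal_ofReal (by linarith), ENNReal.toReal_ofReal hp0]
        have hdne : ((n : ℝ) - t + 1) ≠ 0 := ne_of_gt hdpos
        field_simp
        ring
      · have hempty : {ω | Y t ω = y} = ∅ := by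
          ext ω
          simp only [Set.mem_setOf_eq, Set.mem_empty_iff_false, iff_false]
          intro h
          have := hYtb ω
          omega
        have hA0 : μ (A y) = 0 :=
          measure_mono_null (fun ω h => by
            have : ω ∈ ({ω | Y t ω = y} : Set Ω) := h.1
            rw [hempty] at this; exact this) (by simp)
        have hB0 : μ (B y) = 0 :=
          measure_mono_null (fun ω h => by
            have : ω ∈ ({ω | Y t ω = y} : Set Ω) := h.1
            rw [hempty] at this; exact this) (by simp)
        rw [hA0, hB0, hempty]
        simp
    -- expectation & tail prob of Y t
    have hEt := nat_integral_eq_sum μ (Y t) (hmeas t) n hYtn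
    have hPt := nat_prob_ge_one μ (Y t) (hmeas t) n hYtn
    rw [hint, Finset.sum_congr rfl hterm, hEt, hPt]
    -- pure finite-sum algebra
    have h1 : ∑ y ∈ Finset.range (n + 1), (y : ℝ) * (μ {ω | Y t ω = y}).toReal
        = ∑ y ∈ Finset.Icc 1 n, (y : ℝ) * (μ {ω | Y t ω = y}).toReal := by
      refine (Finset.sum_subset ?_ ?_).symm
      · intro x hx
        rw [Finset.mem_range]
        have := (Finset.mem_Icc.mp hx).2; omega
      · intro x hx hnx
        have hx0 : x = 0 := by
          rw [Finset.mem_range] at hx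
          rw [Finset.mem_Icc] at hnx
          omega
        simp [hx0]
    have h2 : ∑ y ∈ Finset.Icc 2 n,
          (1 - 1 / ((n : ℝ) - t + 1)) * (((y : ℝ) - 1) * (μ {ω | Y t ω = y}).toReal)
        = ∑ y ∈ Finset.Icc 1 n,
          (1 - 1 / ((n : ℝ) - t + 1)) * (((y : ℝ) - 1) * (μ {ω | Y t ω = y}).toReal) := by
      refine Finset.sum_subset ?_ ?_
      · intro x hx
        rw [Finset.mem_Icc] at hx ⊢
        omega
      · intro x hx hnx
        have hx1 : x = 1 := by
          rw [Finset.mem_Icc] at hx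
          rw [Finset.mem_Icc] at hnx
          omega
        simp [hx1]
    rw [h1, h2, ← Finset.sum_sub_distrib, Finset.mul_sum]
    refine Finset.sum_congr rfl fun y _ => ?_
    ring
end

section
/- Consider the LP: maximize ∑_{t=1}^{n} α_t over (α_t) ∈ [0,1]^n subject to δ₁ = n, δ_{t+1} = (1 - 1/(n-t+1))·(δ_t - α_t) for t ∈ [n], and 0 ≤ α_t ≤ min(δ_t, 1) for all t ∈ [n]. Any optimal solution (α_t) satisfies α_t = min(δ_t, 1) for every t ∈ [n]. -/
/-- Perturbed control: keep `α` before `t0`, push `α t0` up to its cap,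
    and truncate later values to remain feasible. -/
noncomputable def Bfun (t0 : ℕ) (α δ : ℕ → ℝ) (s : ℕ) (d : ℝ) : ℝ :=
  if s < t0 then α s else if s = t0 then min (δ t0) 1 else min (α s) d

/-- `Dseq n t0 α δ k` is the perturbed `δ'` at time `k + 1`. -/
noncomputable def Dseq (n t0 : ℕ) (α δ : ℕ → ℝ) : ℕ → ℝ
  | 0 => (n : ℝ)
  | (k+1) => (1 - 1 / ((n : ℝ) - ((k : ℝ) + 1) + 1)) *
      (Dseq n t0 α δ k - Bfun t0 α δ (k+1) (Dseq n t0 α δ k))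

/-- Any optimal solution of the factor-revealing LP satisfies
    α_t = min(δ_t, 1) for every t ∈ [n]. -/
theorem stmt_10 (n : ℕ) (hn : 1 ≤ n) (α δ : ℕ → ℝ)
    (hδ1 : δ 1 = n)
    (hrec : ∀ t, 1 ≤ t → t ≤ n →
      δ (t + 1) = (1 - 1 / ((n : ℝ) - t + 1)) * (δ t - α t))
    (hfeas : ∀ t, 1 ≤ t → t ≤ n → 0 ≤ α t ∧ α t ≤ min (δ t) 1)
    (hopt : ∀ β δ' : ℕ → ℝ, δ' 1 = n →
      (∀ t, 1 ≤ t → t ≤ n →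
        δ' (t + 1) = (1 - 1 / ((n : ℝ) - t + 1)) * (δ' t - β t)) →
      (∀ t, 1 ≤ t → t ≤ n → 0 ≤ β t ∧ β t ≤ min (δ' t) 1) →
      ∑ t ∈ Finset.Icc 1 n, β t ≤ ∑ t ∈ Finset.Icc 1 n, α t) :
    ∀ t, 1 ≤ t → t ≤ n → α t = min (δ t) 1 := by
  intro t0 ht01 ht0n
  by_contra hne
  have hf0 := hfeas t0 ht01 ht0n
  have hlt : α t0 < min (δ t0) 1 := lt_of_le_of_ne hf0.2 hne
  -- basic facts about the coefficient c t = 1 - 1/(n - t + 1)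
  have hc : ∀ t : ℕ, 1 ≤ t → t ≤ n →
      0 < 1 / ((n : ℝ) - t + 1) ∧ 0 ≤ 1 - 1 / ((n : ℝ) - t + 1) := by
    intro t _ htn
    have hx : (1 : ℝ) ≤ (n : ℝ) - t + 1 := by
      have : (t : ℝ) ≤ n := by exact_mod_cast htn
      linarith
    have hxpos : (0 : ℝ) < (n : ℝ) - t + 1 := by linarith
    constructor
    · positivity
    · have : 1 / ((n : ℝ) - t + 1) ≤ 1 := by
        rw [div_le_one hxpos]; linarith
      linarith
  -- the perturbed solution
  set δ' : ℕ → ℝ := fun s => Dseq n t0 α δ (s - 1) with hδ'def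
  set β : ℕ → ℝ := fun s => Bfun t0 α δ s (δ' s) with hβdef
  have hδ'1 : δ' 1 = (n : ℝ) := rfl
  have hrec' : ∀ t, 1 ≤ t → t ≤ n →
      δ' (t + 1) = (1 - 1 / ((n : ℝ) - t + 1)) * (δ' t - β t) := by
    intro t ht _
    obtain ⟨k, rfl⟩ : ∃ k, t = k + 1 := ⟨t - 1, (Nat.succ_pred_eq_of_pos ht).symm⟩
    show Dseq n t0 α δ (k + 1 + 1 - 1) = _
    have h1 : k + 1 + 1 - 1 = k + 1 := rfl
    rw [h1]
    show (1 - 1 / ((n : ℝ) - ((k : ℝ) + 1) + 1)) *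
        (Dseq n t0 α δ k - Bfun t0 α δ (k+1) (Dseq n t0 α δ k)) = _
    have h2 : δ' (k + 1) = Dseq n t0 α δ k := rfl
    have h3 : β (k + 1) = Bfun t0 α δ (k+1) (Dseq n t0 α δ k) := rfl
    rw [h2, h3]
    push_cast
    ring
  -- β agrees with α strictly before t0
  have hβlt : ∀ s, s < t0 → β s = α s := by
    intro s hs; simp [hβdef, Bfun, hs]
  have hβt0 : β t0 = min (δ t0) 1 := by
    simp [hβdef, Bfun]
  have hβgt : ∀ s, t0 < s → β s = min (α s) (δ' s) := by
    intro s hs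
    have h1 : ¬ s < t0 := by omega
    have h2 : s ≠ t0 := by omega
    simp [hβdef, Bfun, h1, h2]
  -- δ' = δ up to t0
  have h1 : ∀ t, 1 ≤ t → t ≤ t0 → δ' t = δ t := by
    intro t ht
    induction t, ht using Nat.le_induction with
    | base => intro _; rw [hδ'1, hδ1]
    | succ t ht ih =>
      intro hle
      have htlt : t < t0 := by omega
      have htn : t ≤ n := by omega
      rw [hrec' t ht htn, hrec t ht htn, ih (by omega), hβlt t htlt]
  have hδ't0 : δ' t0 = δ t0 := h1 t0 ht01 le_rfl
  -- the key invariant after t0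
  have h3 : ∀ t, t0 + 1 ≤ t → t ≤ n + 1 →
      0 ≤ δ' t ∧ δ' t ≤ δ t ∧
      (∑ s ∈ Finset.Ico (t0+1) t, (α s - β s)) + (δ t - δ' t)
        ≤ δ (t0+1) - δ' (t0+1) := by
    intro t ht
    induction t, ht using Nat.le_induction with
    | base =>
      intro _
      have hct0 := hc t0 ht01 ht0n
      have hδ'e : δ' (t0+1) = (1 - 1 / ((n : ℝ) - t0 + 1)) * (δ t0 - min (δ t0) 1) := by
        rw [hrec' t0 ht01 ht0n, hδ't0, hβt0]
      have hδe : δ (t0+1) = (1 - 1 / ((n : ℝ) - t0 + 1)) * (δ t0 - α t0) :=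
        hrec t0 ht01 ht0n
      have hmin : min (δ t0) 1 ≤ δ t0 := min_le_left _ _
      refine ⟨?_, ?_, ?_⟩
      · rw [hδ'e]; exact mul_nonneg hct0.2 (by linarith)
      · rw [hδ'e, hδe]
        exact mul_le_mul_of_nonneg_left (by linarith) hct0.2
      · simp
    | succ t ht ih =>
      intro hle
      have htn : t ≤ n := by omega
      have ht1 : 1 ≤ t := by omega
      obtain ⟨hd0, hdle, hsum⟩ := ih (by omega)
      have hfα := hfeas t ht1 htn
      have hαδ : α t ≤ δ t := le_trans hfα.2 (min_le_left _ _)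
      have hα1 : α t ≤ 1 := le_trans hfα.2 (min_le_right _ _)
      have hβt : β t = min (α t) (δ' t) := hβgt t (by omega)
      have hβle1 : β t ≤ α t := by rw [hβt]; exact min_le_left _ _
      have hβle2 : β t ≤ δ' t := by rw [hβt]; exact min_le_right _ _
      have hloss : α t - β t ≤ δ t - δ' t := by
        rcases le_total (α t) (δ' t) with h | h
        · rw [hβt, min_eq_left h]; linarith
        · rw [hβt, min_eq_right h]; linarith
      have hct := hc t ht1 htn
      have hδ'e := hrec' t ht1 htn
      have hδe := hrec t ht1 htn
      have hc1 : 1 - 1 / ((n : ℝ) - t + 1) ≤ 1 := by linarith [hct.1]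
      set c := 1 - 1 / ((n : ℝ) - t + 1) with hcdef
      have hd0' : 0 ≤ δ' (t + 1) := by
        rw [hδ'e]; exact mul_nonneg hct.2 (by linarith)
      have hdle' : δ' (t + 1) ≤ δ (t + 1) := by
        rw [hδ'e, hδe]
        exact mul_le_mul_of_nonneg_left (by linarith) hct.2
      refine ⟨hd0', hdle', ?_⟩
      rw [Finset.sum_Ico_succ_top (by omega : t0 + 1 ≤ t)]
      -- key step: (α t - β t) + (δ (t+1) - δ' (t+1)) ≤ δ t - δ' t
      have key : (α t - β t) + (δ (t+1) - δ' (t+1)) ≤ δ t - δ' t := by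
        rw [hδ'e, hδe]
        have h2 : (1 - c) * (α t - β t) ≤ (1 - c) * (δ t - δ' t) :=
          mul_le_mul_of_nonneg_left hloss (by linarith)
        nlinarith [hct.2]
      linarith
  -- feasibility of the perturbed solution
  have hfeas' : ∀ t, 1 ≤ t → t ≤ n → 0 ≤ β t ∧ β t ≤ min (δ' t) 1 := by
    intro t ht1 htn
    rcases lt_trichotomy t t0 with h | h | h
    · rw [hβlt t h, h1 t ht1 (le_of_lt h)]
      exact hfeas t ht1 htn
    · subst h
      rw [hβt0, hδ't0]
      exact ⟨le_trans hf0.1 hf0.2, le_rfl⟩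
    · have hβt : β t = min (α t) (δ' t) := hβgt t h
      have hd0 := (h3 t (by omega) (by omega)).1
      have hfα := hfeas t ht1 htn
      have hα1 : α t ≤ 1 := le_trans hfα.2 (min_le_right _ _)
      constructor
      · rw [hβt]; exact le_min hfα.1 hd0
      · rw [hβt]
        exact le_min (le_trans (min_le_right _ _) le_rfl)
          (le_trans (min_le_left _ _) hα1)
  -- optimality gives the contradiction
  have hle := hopt β δ' hδ'1 hrec' hfeas'
  -- compute the difference of the sums
  have hsum1 : ∑ s ∈ Finset.Icc 1 t0, (β s - α s) = β t0 - α t0 := by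
    refine Finset.sum_eq_single_of_mem t0 (by simp [ht01]) ?_
    intro b hb hbne
    have : b < t0 := by
      simp only [Finset.mem_Icc] at hb; omega
    rw [hβlt b this]; ring
  have hbound := h3 (n + 1) (by omega) le_rfl
  have hIco : Finset.Ico (t0+1) (n+1) = Finset.Icc (t0+1) n := Finset.Ico_add_one_right_eq_Icc _ _
  have hsum2 : (∑ s ∈ Finset.Icc (t0+1) n, (α s - β s)) ≤ δ (t0+1) - δ' (t0+1) := by
    have := hbound.2.2
    rw [hIco] at this
    have h0 : 0 ≤ δ (n+1) - δ' (n+1) := by linarith [hbound.1, hbound.2.1]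
    linarith
  -- δ (t0+1) - δ' (t0+1) = c * ε
  have hct0 := hc t0 ht01 ht0n
  set c0 := 1 - 1 / ((n : ℝ) - t0 + 1) with hc0def
  have hdiff : δ (t0+1) - δ' (t0+1) = c0 * (min (δ t0) 1 - α t0) := by
    rw [hrec t0 ht01 ht0n, hrec' t0 ht01 ht0n, hδ't0, hβt0]
    ring
  -- split the Icc 1 n sums
  have hsplit : ∑ s ∈ Finset.Icc 1 n, (β s - α s)
      = (∑ s ∈ Finset.Icc 1 t0, (β s - α s)) + ∑ s ∈ Finset.Icc (t0+1) n, (β s - α s) := by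
    have e1 : Finset.Icc 1 n = Finset.Ioc 0 n := by
      ext x; simp [Nat.lt_iff_add_one_le]
    have e2 : Finset.Icc 1 t0 = Finset.Ioc 0 t0 := by
      ext x; simp [Nat.lt_iff_add_one_le]
    have e3 : Finset.Icc (t0+1) n = Finset.Ioc t0 n := by
      ext x; simp only [Finset.mem_Icc, Finset.mem_Ioc]; omega
    rw [e1, e2, e3,
      Finset.sum_Ioc_consecutive _ (Nat.zero_le t0) ht0n]
  have htot : ∑ s ∈ Finset.Icc 1 n, β s - ∑ s ∈ Finset.Icc 1 n, α s
      = ∑ s ∈ Finset.Icc 1 n, (β s - α s) := (Finset.sum_sub_distrib _ _).symm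
  have hsum2' : -(∑ s ∈ Finset.Icc (t0+1) n, (β s - α s)) ≤ c0 * (min (δ t0) 1 - α t0) := by
    have : ∑ s ∈ Finset.Icc (t0+1) n, (α s - β s)
        = -(∑ s ∈ Finset.Icc (t0+1) n, (β s - α s)) := by
      rw [← Finset.sum_neg_distrib]
      exact Finset.sum_congr rfl fun x _ => by ring
    rw [← this, ← hdiff]; exact hsum2
  -- conclude
  have hε : 0 < min (δ t0) 1 - α t0 := by linarith
  have hgain : (1 / ((n : ℝ) - t0 + 1)) * (min (δ t0) 1 - α t0) > 0 :=
    mul_pos hct0.1 hε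
  have hfinal : ∑ s ∈ Finset.Icc 1 n, (β s - α s) ≤ 0 := by
    rw [← htot]; linarith
  rw [hsplit, hsum1, hβt0] at hfinal
  have hexp : c0 * (min (δ t0) 1 - α t0)
      = (min (δ t0) 1 - α t0) - 1 / ((n : ℝ) - t0 + 1) * (min (δ t0) 1 - α t0) := by
    rw [hc0def]; ring
  rw [hexp] at hsum2'
  linarith [hsum2', hgain, hfinal]
end

section
/- In the LP from the KVV correction, if (α_t) is feasible with δ_{t+1} = (1 - 1/(n-t+1))·(δ_t - α_t) and α_ℓ < min(δ_ℓ, 1) for some ℓ < n with α_{ℓ+1} > 0, then the modified solution α'_ℓ = α_ℓ + ε, α'_{ℓ+1} = α_{ℓ+1} - ε·(1 - 1/(n-ℓ+1)) (with ε = min(min(δ_ℓ,1) - α_ℓ, α_{ℓ+1}/(1 - 1/(n-ℓ+1))) and all other coordinates unchanged) is feasible and has objective value strictly larger, increased by exactly ε/(n-ℓ+1). -/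
/-- Exchange argument: increasing α_ℓ by ε and decreasing α_{ℓ+1} by
    ε·(1 - 1/(n-ℓ+1)) preserves feasibility and raises the objective
    by exactly ε/(n-ℓ+1). -/
theorem stmt_11 (n ℓ : ℕ) (hn : 1 ≤ n) (hℓ1 : 1 ≤ ℓ) (hℓn : ℓ < n)
    (α δ : ℕ → ℝ) (hδ1 : δ 1 = n)
    (hrec : ∀ t, 1 ≤ t → t ≤ n →
      δ (t + 1) = (1 - 1 / ((n : ℝ) - t + 1)) * (δ t - α t))
    (hfeas : ∀ t, 1 ≤ t → t ≤ n → 0 ≤ α t ∧ α t ≤ min (δ t) 1)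
    (hslack : α ℓ < min (δ ℓ) 1) (hpos : 0 < α (ℓ + 1))
    (ε : ℝ)
    (hε : ε = min (min (δ ℓ) 1 - α ℓ)
      (α (ℓ + 1) / (1 - 1 / ((n : ℝ) - ℓ + 1))))
    (α' : ℕ → ℝ)
    (hα' : α' = fun t => if t = ℓ then α ℓ + ε
      else if t = ℓ + 1 then α (ℓ + 1) - ε * (1 - 1 / ((n : ℝ) - ℓ + 1))
      else α t)
    (δ' : ℕ → ℝ) (hδ'1 : δ' 1 = n)
    (hrec' : ∀ t, 1 ≤ t → t ≤ n →
      δ' (t + 1) = (1 - 1 / ((n : ℝ) - t + 1)) * (δ' t - α' t)) :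
    (∀ t, 1 ≤ t → t ≤ n → 0 ≤ α' t ∧ α' t ≤ min (δ' t) 1) ∧
    ∑ t ∈ Finset.Icc 1 n, α' t =
      (∑ t ∈ Finset.Icc 1 n, α t) + ε / ((n : ℝ) - ℓ + 1) := by
  have hℓn' : (ℓ : ℝ) + 1 ≤ (n : ℝ) := by exact_mod_cast hℓn
  set D : ℝ := (n : ℝ) - ℓ + 1 with hD
  have hD2 : (2 : ℝ) ≤ D := by rw [hD]; linarith
  have hD0 : (0 : ℝ) < D := by linarith
  have hc : (0 : ℝ) < 1 - 1 / D := by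
    have h1 : 1 / D ≤ 1 / 2 := by
      apply one_div_le_one_div_of_le <;> linarith
    linarith
  have hεpos : 0 < ε := by
    rw [hε]
    exact lt_min (by linarith) (div_pos hpos hc)
  have hεle1 : ε ≤ min (δ ℓ) 1 - α ℓ := hε ▸ min_le_left _ _
  have hεle2 : ε * (1 - 1 / D) ≤ α (ℓ + 1) := by
    have := hε ▸ min_le_right (min (δ ℓ) 1 - α ℓ)
      (α (ℓ + 1) / (1 - 1 / D))
    exact (le_div_iff₀ hc).mp this
  -- δ' = δ up to ℓ
  have hδeq_le : ∀ t, 1 ≤ t → t ≤ ℓ → δ' t = δ t := by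
    intro t ht1
    induction t, ht1 using Nat.le_induction with
    | base => intro _; rw [hδ'1, hδ1]
    | succ s hs ih =>
      intro hsl
      have hsℓ : s < ℓ := by omega
      have hsn : s ≤ n := by omega
      have h1 : s ≠ ℓ := by omega
      have h2 : s ≠ ℓ + 1 := by omega
      have hαs : α' s = α s := by rw [hα']; simp [h1, h2]
      rw [hrec' s hs hsn, hrec s hs hsn, ih (by omega), hαs]
  have hδℓ : δ' ℓ = δ ℓ := hδeq_le ℓ hℓ1 le_rfl
  have hαℓ : α' ℓ = α ℓ + ε := by rw [hα']; simp
  have hαℓ1 : α' (ℓ + 1) = α (ℓ + 1) - ε * (1 - 1 / D) := by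
    rw [hα']; simp
  have hδℓ1 : δ' (ℓ + 1) = δ (ℓ + 1) - ε * (1 - 1 / D) := by
    rw [hrec' ℓ hℓ1 hℓn.le, hrec ℓ hℓ1 hℓn.le, hδℓ, hαℓ]
    ring
  have hℓ1n : ℓ + 1 ≤ n := hℓn
  have hδℓ2 : δ' (ℓ + 2) = δ (ℓ + 2) := by
    have h1 : 1 ≤ ℓ + 1 := by omega
    have := hrec' (ℓ + 1) h1 hℓ1n
    rw [show ℓ + 1 + 1 = ℓ + 2 from rfl] at this
    have that := hrec (ℓ + 1) h1 hℓ1n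
    rw [show ℓ + 1 + 1 = ℓ + 2 from rfl] at that
    rw [this, that, hδℓ1, hαℓ1]
    ring
  have hδeq_ge : ∀ t, ℓ + 2 ≤ t → t ≤ n + 1 → δ' t = δ t := by
    intro t ht2
    induction t, ht2 using Nat.le_induction with
    | base => intro _; exact hδℓ2
    | succ s hs ih =>
      intro hsn
      have hsn' : s ≤ n := by omega
      have h1s : 1 ≤ s := by omega
      have h1 : s ≠ ℓ := by omega
      have h2 : s ≠ ℓ + 1 := by omega
      have hαs : α' s = α s := by rw [hα']; simp [h1, h2]
      rw [hrec' s h1s hsn', hrec s h1s hsn', ih (by omega), hαs]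
  constructor
  · intro t ht1 htn
    by_cases h1 : t = ℓ
    · subst h1
      have hf := hfeas t ht1 htn
      rw [hαℓ, hδℓ]
      exact ⟨by linarith [hf.1], by linarith⟩
    · by_cases h2 : t = ℓ + 1
      · subst h2
        have hf := hfeas (ℓ + 1) ht1 htn
        have hfδ : α (ℓ + 1) ≤ δ (ℓ + 1) := hf.2.trans (min_le_left _ _)
        have hf1 : α (ℓ + 1) ≤ 1 := hf.2.trans (min_le_right _ _)
        have hεc : 0 ≤ ε * (1 - 1 / D) := mul_nonneg hεpos.le hc.le
        rw [hαℓ1, hδℓ1]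
        refine ⟨by linarith, le_min (by linarith) (by linarith)⟩
      · have hδeq : δ' t = δ t := by
          rcases le_or_gt t ℓ with h | h
          · exact hδeq_le t ht1 h
          · exact hδeq_ge t (by omega) (by omega)
        have hαeq : α' t = α t := by rw [hα']; simp [h1, h2]
        rw [hαeq, hδeq]
        exact hfeas t ht1 htn
  · have hsub : ({ℓ, ℓ + 1} : Finset ℕ) ⊆ Finset.Icc 1 n := by
      intro x hx
      simp only [Finset.mem_insert, Finset.mem_singleton] at hx
      rw [Finset.mem_Icc]
      omega
    have hsum : ∑ t ∈ Finset.Icc 1 n, (α' t - α t) = ε - ε * (1 - 1 / D) := by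
      rw [← Finset.sum_subset hsub]
      · rw [Finset.sum_pair (by omega : ℓ ≠ ℓ + 1), hαℓ, hαℓ1]
        ring
      · intro x _ hx2
        simp only [Finset.mem_insert, Finset.mem_singleton, not_or] at hx2
        rw [hα']
        simp [hx2.1, hx2.2]
    rw [Finset.sum_sub_distrib] at hsum
    have hfin : ε - ε * (1 - 1 / D) = ε / D := by
      field_simp
      ring
    linarith
end

section
/- Let δ*₁ = n and δ*_{t+1} = (1 - 1/(n-t+1))·(δ*_t - 1) for t ∈ [n]. If t* = ⌈(1-1/e)n + 2 - 1/e⌉ satisfies t* ≤ n, then δ*_{t*} ≤ 0. -/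
/-- For δ*₁ = n, δ*_{t+1} = (1 - 1/(n-t+1))(δ*_t - 1): if
    t* = ⌈(1-1/e)n + 2 - 1/e⌉ satisfies t* ≤ n then δ*_{t*} ≤ 0. -/
theorem stmt_12 (n : ℕ) (hn : 1 ≤ n) (δ : ℕ → ℝ)
    (hδ1 : δ 1 = n)
    (hrec : ∀ t, 1 ≤ t → t ≤ n →
      δ (t + 1) = (1 - 1 / ((n : ℝ) - t + 1)) * (δ t - 1))
    (htstar : ⌈(1 - 1 / Real.exp 1) * n + 2 - 1 / Real.exp 1⌉₊ ≤ n) :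
    δ ⌈(1 - 1 / Real.exp 1) * n + 2 - 1 / Real.exp 1⌉₊ ≤ 0 := by
  set T := ⌈(1 - 1 / Real.exp 1) * n + 2 - 1 / Real.exp 1⌉₊ with hTdef
  have he : (1:ℝ) < Real.exp 1 := by
    have := Real.exp_one_gt_d9; linarith
  have he0 : (0:ℝ) < Real.exp 1 := by linarith
  have hn1 : (0:ℝ) < (n:ℝ) + 1 := by positivity
  -- key induction
  have key : ∀ t, 1 ≤ t → t ≤ n + 1 →
      δ t ≤ ((n:ℝ) + 1 - t) * (1 - Real.log (((n:ℝ) + 1) / ((n:ℝ) + 2 - t))) := by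
    intro t ht
    induction t, ht using Nat.le_induction with
    | base =>
      intro _
      have : ((n:ℝ) + 1) / ((n:ℝ) + 2 - (1:ℕ)) = 1 := by
        push_cast
        rw [div_eq_one_iff_eq (by linarith)]
        ring
      rw [hδ1, this, Real.log_one]
      push_cast
      linarith
    | succ t ht ih =>
      intro hle
      have htn : t ≤ n := by omega
      have ih' := ih (by omega)
      set m : ℝ := (n:ℝ) + 1 - t with hm
      have hm1 : (1:ℝ) ≤ m := by
        have : (t:ℝ) ≤ n := by exact_mod_cast htn
        simp [hm]; linarith
      have hm0 : (0:ℝ) < m := by linarith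
      have hrec' := hrec t ht htn
      have hmne : ((n:ℝ) - t + 1) = m := by rw [hm]; ring
      rw [hmne] at hrec'
      have hfac : (0:ℝ) ≤ 1 - 1/m := by
        have : 1/m ≤ 1 := by rw [div_le_one hm0]; exact hm1
        linarith
      -- logs
      have hA : ((n:ℝ) + 2 - t) = m + 1 := by rw [hm]; ring
      have hB : ((n:ℝ) + 2 - (t+1:ℕ)) = m := by push_cast; rw [hm]; ring
      have hL1 : Real.log (((n:ℝ)+1)/(m+1)) = Real.log ((n:ℝ)+1) - Real.log (m+1) :=
        Real.log_div (by linarith) (by linarith)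
      have hL2 : Real.log (((n:ℝ)+1)/m) = Real.log ((n:ℝ)+1) - Real.log m :=
        Real.log_div (by linarith) (by linarith)
      have hBC : Real.log (m+1) - Real.log m ≤ 1/m := by
        have h1 : Real.log ((m+1)/m) ≤ (m+1)/m - 1 :=
          Real.log_le_sub_one_of_pos (by positivity)
        have h2 : Real.log ((m+1)/m) = Real.log (m+1) - Real.log m :=
          Real.log_div (by linarith) (by linarith)
        have h3 : (m+1)/m - 1 = 1/m := by field_simp; ring
        linarith [h2 ▸ h3 ▸ h1]
      rw [hA] at ih'
      rw [hrec']
      have step1 : (1 - 1/m) * (δ t - 1) ≤ (1 - 1/m) * (m * (1 - Real.log (((n:ℝ)+1)/(m+1))) - 1) := by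
        apply mul_le_mul_of_nonneg_left _ hfac
        linarith
      refine le_trans step1 ?_
      have hgoal : ((n:ℝ) + 1 - (t+1:ℕ)) = m - 1 := by push_cast; rw [hm]; ring
      rw [hgoal, hB, hL1, hL2]
      set A := Real.log ((n:ℝ)+1)
      set B := Real.log (m+1)
      set C := Real.log m
      have key2 : m * ((1 - 1/m) * (m * (1 - (A - B)) - 1)) ≤ m * ((m - 1) * (1 - (A - C))) := by
        have hmm : m * (1 - 1/m) = m - 1 := by field_simp
        have hexp : m * ((1 - 1/m) * (m * (1 - (A - B)) - 1)) = (m - 1) * (m * (1 - A + B) - 1) := by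
          rw [show m * ((1 - 1/m) * (m * (1 - (A - B)) - 1))
              = (m * (1 - 1/m)) * (m * (1 - (A - B)) - 1) by ring, hmm]
          ring
        have hexp2 : m * ((m - 1) * (1 - (A - C))) = (m - 1) * (m * (1 - A + C)) := by ring
        rw [hexp, hexp2]
        have h4 : m * (B - C) ≤ 1 := by
          have := mul_le_mul_of_nonneg_left hBC hm0.le
          rw [mul_one_div, div_self hm0.ne'] at this
          linarith
        nlinarith [sub_nonneg.mpr hm1]
      exact le_of_mul_le_mul_left key2 hm0
  -- apply at T
  have hceil : ((1 - 1 / Real.exp 1) * n + 2 - 1 / Real.exp 1 : ℝ) ≤ T := Nat.le_ceil _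
  have hie : (0:ℝ) < 1 / Real.exp 1 := by positivity
  have hie1 : 1 / Real.exp 1 < 1 := by rw [div_lt_one he0]; exact he
  have h1T : 1 ≤ T := by
    rw [hTdef]
    apply Nat.one_le_ceil_iff.mpr
    have : (0:ℝ) ≤ (1 - 1/Real.exp 1) * n := by
      apply mul_nonneg (by linarith) (by positivity)
    linarith
  have hbound := key T h1T (by omega)
  have hTn : (T:ℝ) ≤ n := by exact_mod_cast htstar
  have hx0 : (0:ℝ) < (n:ℝ) + 2 - T := by linarith
  have hi : (1/Real.exp 1) * Real.exp 1 = 1 := one_div_mul_cancel he0.ne'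
  have hx2 : ((n:ℝ) + 2 - T) * Real.exp 1 ≤ (n:ℝ) + 1 := by
    nlinarith [mul_le_mul_of_nonneg_right hceil he0.le]
  have hlog : 1 ≤ Real.log (((n:ℝ)+1)/((n:ℝ)+2-T)) := by
    rw [Real.le_log_iff_exp_le (by positivity)]
    rw [le_div_iff₀ hx0]
    linarith
  have := mul_nonpos_of_nonneg_of_nonpos (a := (n:ℝ)+1-T)
    (by linarith) (by linarith : 1 - Real.log (((n:ℝ)+1)/((n:ℝ)+2-T)) ≤ 0)
  linarith
end

section
/- The optimal value of the LP — maximize ∑_{t=1}^{n} α_t subject to δ₁ = n, δ_{t+1} = (1 - 1/(n-t+1))(δ_t - α_t), 0 ≤ α_t ≤ min(δ_t, 1) — is at most ⌈(1-1/e)·n + 2 - 1/e⌉. -/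
open Finset

private lemma stmt16_harmonic (n k : ℕ) (hk : k ≤ n) :
    Real.log (((n:ℝ)+1) / ((n:ℝ) - k + 1)) ≤
      ∑ t ∈ Finset.Ioc 0 k, 1 / ((n:ℝ) - t + 1) := by
  have hre : ∑ t ∈ Finset.Ioc 0 k, 1 / ((n:ℝ) - t + 1)
      = ∑ i ∈ Finset.range k, 1 / ((n:ℝ) - i) := by
    rw [show Finset.Ioc 0 k = Finset.Ico 1 (k+1) by ext x; simp; omega,
      Finset.sum_Ico_eq_sum_range]
    simp only [Nat.add_sub_cancel]
    apply Finset.sum_congr rfl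
    intro i _
    push_cast
    ring_nf
  rw [hre]
  have key : Real.log ((n:ℝ)+1 - (0:ℕ)) - Real.log ((n:ℝ)+1 - k)
      = ∑ i ∈ Finset.range k, (Real.log ((n:ℝ)+1 - i) - Real.log ((n:ℝ)+1 - (i+1:ℕ))) := by
    rw [Finset.sum_range_sub' (fun i => Real.log ((n:ℝ)+1 - i))]
  have hlog : Real.log (((n:ℝ)+1) / ((n:ℝ) - k + 1))
      = Real.log ((n:ℝ)+1 - (0:ℕ)) - Real.log ((n:ℝ)+1 - k) := by
    have hk' : (k:ℝ) ≤ n := by exact_mod_cast hk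
    rw [Real.log_div (by linarith) (by linarith)]
    norm_num
    ring_nf
  rw [hlog, key]
  apply Finset.sum_le_sum
  intro i hi
  have hi' : (i:ℝ) < n := by
    have : i < k := Finset.mem_range.mp hi
    have : (i:ℝ) < k := by exact_mod_cast this
    have hk' : (k:ℝ) ≤ n := by exact_mod_cast hk
    linarith
  have h1 : (0:ℝ) < (n:ℝ) - i := by linarith
  have h2 : (0:ℝ) < (n:ℝ) + 1 - (i+1:ℕ) := by push_cast; linarith
  rw [← Real.log_div (by linarith) (by linarith)]
  have hnum : (0:ℝ) < (n:ℝ)+1-i := by linarith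
  have := Real.log_le_sub_one_of_pos (div_pos hnum h2)
  have heq : ((n:ℝ)+1-i)/((n:ℝ)+1-(i+1:ℕ)) - 1 = 1/((n:ℝ) - i) := by
    push_cast
    have h3 : (n:ℝ)+1-((i:ℝ)+1) = n - i := by ring
    rw [h3, div_sub_one h1.ne']
    ring
  linarith

private lemma stmt16_budget (n : ℕ) (hn : 1 ≤ n) (α δ : ℕ → ℝ)
    (hδ1 : δ 1 = n)
    (hrec : ∀ t, 1 ≤ t → t ≤ n →
      δ (t + 1) = (1 - 1 / ((n : ℝ) - t + 1)) * (δ t - α t))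
    (hfeas : ∀ t, 1 ≤ t → t ≤ n → 0 ≤ α t ∧ α t ≤ min (δ t) 1) :
    ∑ t ∈ Finset.Ioc 0 n, α t / ((n:ℝ) - t + 1) ≤ 1 := by
  have claim : ∀ j, j + 1 ≤ n → δ (j+1) =
      ((n:ℝ) - (j+1:ℕ) + 1) * (1 - ∑ s ∈ Finset.Ioc 0 j, α s / ((n:ℝ) - s + 1)) := by
    intro j
    induction j with
    | zero => intro _; simp [hδ1]
    | succ i ih =>
      intro h
      have hi : i + 1 ≤ n := by omega
      have hih := ih hi
      have hrec' := hrec (i+1) (by omega) hi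
      have hpos : (1:ℝ) ≤ (n:ℝ) - (i+1:ℕ) := by
        have : ((i+1:ℕ):ℝ) + 1 ≤ n := by exact_mod_cast h
        push_cast at this ⊢; linarith
      rw [show Finset.Ioc 0 (i+1) = insert (i+1) (Finset.Ioc 0 i) by ext x; simp; omega,
        Finset.sum_insert (by simp)]
      rw [hrec', hih]
      push_cast at hpos ⊢
      have hne : (n:ℝ) - (i+1) + 1 ≠ 0 := by linarith
      field_simp
      ring
  obtain ⟨p, rfl⟩ : ∃ p, n = p + 1 := ⟨n-1, by omega⟩
  have hδn := claim p le_rfl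
  have hαn := (hfeas (p+1) (by omega) le_rfl).2
  rw [show Finset.Ioc 0 (p+1) = insert (p+1) (Finset.Ioc 0 p) by ext x; simp; omega,
    Finset.sum_insert (by simp)]
  have h1 : ((p+1:ℕ):ℝ) - ((p+1:ℕ):ℝ) + 1 = 1 := by ring
  rw [hδn] at hαn
  have hml := le_trans hαn (min_le_left _ _)
  rw [h1] at hml
  rw [h1]
  push_cast at hml ⊢
  linarith

private lemma stmt16_knapsack (n m : ℕ) (hm1 : 1 ≤ m) (hmn : m ≤ n) (α : ℕ → ℝ)
    (hα0 : ∀ t, 1 ≤ t → t ≤ n → 0 ≤ α t) (hα1 : ∀ t, 1 ≤ t → t ≤ n → α t ≤ 1)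
    (hbudget : ∑ t ∈ Finset.Ioc 0 n, α t / ((n:ℝ) - t + 1) ≤ 1) :
    ∑ t ∈ Finset.Ioc 0 n, α t ≤ (n:ℝ) - m * Real.log (((n:ℝ)+1)/((m:ℝ)+1)) := by
  set k := n - m with hk
  have hkn : k ≤ n := Nat.sub_le n m
  have hcast : ((m:ℝ)) = (n:ℝ) - k := by
    have : (k:ℝ) = (n:ℝ) - m := by
      rw [hk]; push_cast [Nat.cast_sub hmn]; ring
    linarith
  have hsplitα := Finset.sum_Ioc_consecutive (fun t => α t) (Nat.zero_le k) hkn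
  have hsplitw := Finset.sum_Ioc_consecutive (fun t => α t / ((n:ℝ) - t + 1)) (Nat.zero_le k) hkn
  have htail : ∑ t ∈ Finset.Ioc k n, α t ≤
      (m:ℝ) * ∑ t ∈ Finset.Ioc k n, α t / ((n:ℝ) - t + 1) := by
    rw [Finset.mul_sum]
    apply Finset.sum_le_sum
    intro t ht
    obtain ⟨ht1, ht2⟩ := Finset.mem_Ioc.mp ht
    have htn : (t:ℝ) ≤ n := by exact_mod_cast ht2
    have htk : (k:ℝ) + 1 ≤ t := by exact_mod_cast ht1
    have hpos : (0:ℝ) < (n:ℝ) - t + 1 := by linarith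
    have h0 : 0 ≤ α t := hα0 t (by omega) ht2
    rw [mul_div_assoc', le_div_iff₀ hpos]
    nlinarith [hcast]
  have hhead : ∑ t ∈ Finset.Ioc 0 k, α t ≤
      ∑ t ∈ Finset.Ioc 0 k, (1 - (m:ℝ)/((n:ℝ) - t + 1) + (m:ℝ) * (α t / ((n:ℝ) - t + 1))) := by
    apply Finset.sum_le_sum
    intro t ht
    obtain ⟨ht1, ht2⟩ := Finset.mem_Ioc.mp ht
    have htk : (t:ℝ) ≤ k := by exact_mod_cast ht2
    have hpos : (0:ℝ) < (n:ℝ) - t + 1 := by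
      nlinarith [hcast, (by exact_mod_cast hm1 : (1:ℝ) ≤ m)]
    have h1 : α t ≤ 1 := hα1 t (by omega) (by omega)
    have h0 : 0 ≤ α t := hα0 t (by omega) (by omega)
    have hmle : (m:ℝ) + 1 ≤ (n:ℝ) - t + 1 := by rw [hcast]; linarith
    have key : 1 - (m:ℝ)/((n:ℝ) - t + 1) + (m:ℝ) * (α t/((n:ℝ) - t + 1)) - α t
        = (1 - α t) * (((n:ℝ) - t + 1) - m) / ((n:ℝ) - t + 1) := by
      field_simp
      ring
    have hnn : 0 ≤ (1 - α t) * (((n:ℝ) - t + 1) - m) / ((n:ℝ) - t + 1) :=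
      div_nonneg (mul_nonneg (by linarith) (by linarith)) hpos.le
    linarith
  have hexp : ∑ t ∈ Finset.Ioc 0 k, (1 - (m:ℝ)/((n:ℝ) - t + 1) + (m:ℝ) * (α t / ((n:ℝ) - t + 1)))
      = (k:ℝ) - (m:ℝ) * ∑ t ∈ Finset.Ioc 0 k, 1/((n:ℝ) - t + 1)
        + (m:ℝ) * ∑ t ∈ Finset.Ioc 0 k, α t / ((n:ℝ) - t + 1) := by
    rw [Finset.sum_add_distrib, Finset.sum_sub_distrib, ← Finset.mul_sum]
    simp only [Finset.sum_const, Nat.card_Ioc, nsmul_eq_mul, mul_one, Nat.sub_zero]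
    congr 2
    rw [Finset.mul_sum]
    apply Finset.sum_congr rfl
    intro x _
    rw [mul_one_div]
  have hH := stmt16_harmonic n k hkn
  have hwk : 0 ≤ ∑ t ∈ Finset.Ioc k n, α t / ((n:ℝ) - t + 1) := by
    apply Finset.sum_nonneg
    intro t ht
    obtain ⟨ht1, ht2⟩ := Finset.mem_Ioc.mp ht
    have htn : (t:ℝ) ≤ n := by exact_mod_cast ht2
    exact div_nonneg (hα0 t (by omega) ht2) (by linarith)
  have hcast2 : (n:ℝ) - k + 1 = (m:ℝ) + 1 := by linarith
  rw [hcast2] at hH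
  have hm0 : (0:ℝ) ≤ m := Nat.cast_nonneg m
  have hkval : (k:ℝ) = (n:ℝ) - m := by linarith
  nlinarith [mul_le_mul_of_nonneg_left hH hm0,
    mul_le_mul_of_nonneg_left hbudget hm0,
    mul_le_mul_of_nonneg_left (le_of_eq hsplitw) hm0]

private lemma stmt16_analytic (n : ℕ) (hn : 2 ≤ n) :
    ((n:ℝ)+1) / Real.exp 1 - 2 ≤
      (⌊((n:ℝ)+1) / Real.exp 1⌋₊ : ℝ) *
        Real.log (((n:ℝ)+1) / ((⌊((n:ℝ)+1) / Real.exp 1⌋₊ : ℝ) + 1)) := by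
  set e' := Real.exp 1 with he'
  have he1 : (2.7182818283:ℝ) < e' := Real.exp_one_gt_d9
  have he2 : e' < 2.7182818286 := Real.exp_one_lt_d9
  have he'pos : (0:ℝ) < e' := by linarith
  set N : ℝ := (n:ℝ) + 1 with hNdef
  have hN : (3:ℝ) ≤ N := by
    have : (2:ℝ) ≤ n := by exact_mod_cast hn
    simp [hNdef]; linarith
  set r : ℝ := N / e' with hrdef
  have hrpos : 0 < r := by positivity
  have hr1 : 1 < r := by
    rw [hrdef, lt_div_iff₀ he'pos]; linarith
  set m : ℕ := ⌊r⌋₊ with hmdef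
  have hml : r - 1 ≤ (m:ℝ) := by
    have := Nat.lt_floor_add_one r
    linarith
  have hmu : (m:ℝ) ≤ r := Nat.floor_le hrpos.le
  have hLdef : (0:ℝ) < 1 + e'/N := by positivity
  have hL : Real.log (1 + e'/N) ≤ e'/N := by
    have := Real.log_le_sub_one_of_pos hLdef
    linarith
  have hL0 : 0 ≤ Real.log (1 + e'/N) := Real.log_nonneg
    (by have : 0 ≤ e'/N := by positivity
        linarith)
  have hkey : 1 - Real.log (1 + e'/N) ≤ Real.log (N/((m:ℝ)+1)) := by
    have hNpos : (0:ℝ) < N := by linarith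
    have h1 : Real.log (N/((m:ℝ)+1)) = Real.log N - Real.log ((m:ℝ)+1) :=
      Real.log_div (by linarith) (by positivity)
    have h2 : Real.log ((m:ℝ)+1) ≤ Real.log (r+1) :=
      Real.log_le_log (by positivity) (by linarith)
    have h3 : Real.log (r+1) = Real.log (N + e') - 1 := by
      rw [show r + 1 = (N + e')/e' by rw [hrdef]; field_simp,
        Real.log_div (by linarith) (by linarith), he', Real.log_exp]
    have h4 : Real.log (1 + e'/N) = Real.log (N + e') - Real.log N := by
      rw [show 1 + e'/N = (N+e')/N by field_simp,
        Real.log_div (by linarith) (by linarith)]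
    linarith
  have hL1 : Real.log (1 + e'/N) ≤ 1 := by
    have h6 : e'/N ≤ e'/3 :=
      div_le_div_of_nonneg_left he'pos.le (by norm_num) hN
    have : (1:ℝ) + e'/N ≤ e' := by linarith
    calc Real.log (1 + e'/N) ≤ Real.log e' := Real.log_le_log hLdef this
      _ = 1 := by rw [he', Real.log_exp]
  have hre : r * e' = N := by rw [hrdef]; field_simp
  have hrL : r * Real.log (1 + e'/N) ≤ 1 := by
    have := mul_le_mul_of_nonneg_left hL hrpos.le
    have h5 : r * (e'/N) = 1 := by
      rw [hrdef]; field_simp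
    linarith
  nlinarith [mul_le_mul (le_refl (m:ℝ)) hkey (by linarith) (by exact_mod_cast Nat.cast_nonneg m),
    mul_le_mul_of_nonneg_right hml (by linarith : (0:ℝ) ≤ 1 - Real.log (1 + e'/N))]

/-- The optimal value of the factor-revealing LP is at most
    ⌈(1-1/e)·n + 2 - 1/e⌉. -/
theorem stmt_16 (n : ℕ) (hn : 1 ≤ n) (α δ : ℕ → ℝ)
    (hδ1 : δ 1 = n)
    (hrec : ∀ t, 1 ≤ t → t ≤ n →
      δ (t + 1) = (1 - 1 / ((n : ℝ) - t + 1)) * (δ t - α t))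
    (hfeas : ∀ t, 1 ≤ t → t ≤ n → 0 ≤ α t ∧ α t ≤ min (δ t) 1) :
    ∑ t ∈ Finset.Icc 1 n, α t ≤
      (⌈(1 - 1 / Real.exp 1) * n + 2 - 1 / Real.exp 1⌉₊ : ℝ) := by
  have he1 : (2.7182818283:ℝ) < Real.exp 1 := Real.exp_one_gt_d9
  have he2 : Real.exp 1 < 2.7182818286 := Real.exp_one_lt_d9
  have he'pos : (0:ℝ) < Real.exp 1 := by linarith
  have hceil := Nat.le_ceil ((1 - 1 / Real.exp 1) * (n:ℝ) + 2 - 1 / Real.exp 1)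
  have hIcc : Finset.Icc 1 n = Finset.Ioc 0 n := by ext x; simp; omega
  rw [hIcc]
  rcases eq_or_lt_of_le hn with h1 | hn2
  · -- n = 1
    obtain rfl : n = 1 := h1.symm
    have hα := hfeas 1 le_rfl le_rfl
    have hα1 : α 1 ≤ 1 := le_trans hα.2 (min_le_right _ _)
    have hinv : 1 / Real.exp 1 ≤ 1 := by
      rw [div_le_one he'pos]; linarith
    have hinv0 : 0 < 1 / Real.exp 1 := by positivity
    simp only [show Finset.Ioc 0 1 = {1} from rfl, Finset.sum_singleton]
    push_cast at hceil ⊢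
    linarith
  · -- n ≥ 2
    have hn2' : 2 ≤ n := hn2
    have hbudget := stmt16_budget n hn α δ hδ1 hrec hfeas
    set e' := Real.exp 1 with he'
    set N : ℝ := (n:ℝ) + 1 with hNdef
    have hN : (3:ℝ) ≤ N := by
      have : (2:ℝ) ≤ n := by exact_mod_cast hn2'
      simp [hNdef]; linarith
    set m : ℕ := ⌊N / e'⌋₊ with hmdef
    have hm1 : 1 ≤ m := by
      apply Nat.le_floor
      rw [Nat.cast_one, le_div_iff₀ he'pos]
      linarith
    have hmn : m ≤ n := by
      have h : N / e' ≤ (n:ℝ) := by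
        rw [div_le_iff₀ he'pos]
        have hn1 : (1:ℝ) ≤ n := by exact_mod_cast hn
        nlinarith
      calc m = ⌊N / e'⌋₊ := hmdef
        _ ≤ ⌊(n:ℝ)⌋₊ := Nat.floor_le_floor h
        _ = n := Nat.floor_natCast n
    have hα0 : ∀ t, 1 ≤ t → t ≤ n → 0 ≤ α t := fun t h1 h2 => (hfeas t h1 h2).1
    have hα1 : ∀ t, 1 ≤ t → t ≤ n → α t ≤ 1 :=
      fun t h1 h2 => le_trans (hfeas t h1 h2).2 (min_le_right _ _)
    have hknap := stmt16_knapsack n m hm1 hmn α hα0 hα1 hbudget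
    have hana := stmt16_analytic n hn2'
    rw [← hNdef, ← he', ← hmdef] at hana
    rw [← hNdef] at hknap
    have heq : (1 - 1 / e') * (n:ℝ) + 2 - 1 / e' = (n:ℝ) - (N / e' - 2) := by
      rw [hNdef]; field_simp; ring
    linarith
end

section
/- The expected size of the matching produced by the randomized greedy algorithm on the triangular instance M* (equivalently, E[T] for the death process) is at most ⌈(1-1/e)·n + 2 - 1/e⌉ for every n ≥ 1. -/
open Finset Real MeasureTheory
open scoped ENNReal



noncomputable def Hsum (m : ℕ) : ℝ := ∑ j ∈ Finset.range m, (1:ℝ)/(j+1)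

lemma Hsum_succ (m : ℕ) : Hsum (m+1) = Hsum m + 1/(m+1) := by
  simp [Hsum, Finset.sum_range_succ]

-- log b - log a ≤ (b-a)/a  for 0 < a ≤ b
lemma log_sub_log_le {a b : ℝ} (ha : 0 < a) (hab : a ≤ b) :
    Real.log b - Real.log a ≤ (b - a) / a := by
  have hb : 0 < b := lt_of_lt_of_le ha hab
  have h := Real.log_le_sub_one_of_pos (show (0:ℝ) < b / a from div_pos hb ha)
  rw [Real.log_div (ne_of_gt hb) (ne_of_gt ha)] at h
  have : b / a - 1 = (b - a) / a := by field_simp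
  linarith [this ▸ h]

-- (b-a)/b ≤ log b - log a  for 0 < a ≤ b
lemma le_log_sub_log {a b : ℝ} (ha : 0 < a) (hab : a ≤ b) :
    (b - a) / b ≤ Real.log b - Real.log a := by
  have hb : 0 < b := lt_of_lt_of_le ha hab
  have h := Real.log_le_sub_one_of_pos (show (0:ℝ) < a / b from div_pos ha hb)
  rw [Real.log_div (ne_of_gt ha) (ne_of_gt hb)] at h
  have : a / b - 1 = -((b - a)/b) := by field_simp; ring
  linarith [this ▸ h]

lemma Hsum_diff_le_log {m n : ℕ} (hm : 1 ≤ m) (hmn : m ≤ n) :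
    Hsum n - Hsum m ≤ Real.log n - Real.log m := by
  induction n, hmn using Nat.le_induction with
  | base => simp
  | succ k hk ih =>
    have hk0 : (0:ℝ) < k := by exact_mod_cast lt_of_lt_of_le hm hk
    have h1 : ((k:ℝ)+1 - k)/((k:ℝ)+1) ≤ Real.log ((k:ℝ)+1) - Real.log k :=
      le_log_sub_log hk0 (by linarith)
    have h2 : ((k:ℝ)+1 - k)/((k:ℝ)+1) = 1/((k:ℝ)+1) := by ring_nf
    rw [Hsum_succ]
    push_cast
    push_cast at ih h1
    linarith [h2 ▸ h1]

-- step lemma for telescoping:  F x - F (x-1) ≤ log x  where F x = x log x - x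
lemma F_step {x : ℝ} (hx : 1 ≤ x) :
    x * Real.log x - x - ((x-1) * Real.log (x-1) - (x-1)) ≤ Real.log x := by
  rcases eq_or_lt_of_le hx with h | h
  · simp [← h]
  · have h0 : 0 < x - 1 := by linarith
    have := log_sub_log_le h0 (show x - 1 ≤ x by linarith)
    have h2 : (x - (x-1))/(x-1) = 1/(x-1) := by ring_nf
    have h3 : Real.log x - Real.log (x-1) ≤ 1/(x-1) := by linarith [h2 ▸ this]
    have h4 : (x-1) * (Real.log x - Real.log (x-1)) ≤ (x-1) * (1/(x-1)) :=
      mul_le_mul_of_nonneg_left h3 (le_of_lt h0)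
    have h5 : (x-1) * (1/(x-1)) = 1 := by field_simp
    nlinarith [h4, h5]



noncomputable def Flog (x : ℝ) : ℝ := x * Real.log x - x

lemma aux1 {a b : ℝ} (hb0 : 0 < b) (h1 : b - 1 ≤ a) (h2 : a ≤ b) :
    b - 1/b ≤ a * (1 + (b-a)/b) := by
  have e1 : b - 1/b = (b^2 - 1)/b := by field_simp
  have e2 : a * (1 + (b-a)/b) = (2*a*b - a^2)/b := by field_simp; ring
  rw [e1, e2, div_le_div_iff₀ hb0 hb0]
  have k1 : 0 ≤ 1 - (b-a)^2 := by
    nlinarith [mul_nonneg (sub_nonneg.2 h2) (show (0:ℝ) ≤ 1 - (b - a) by linarith)]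
  nlinarith [mul_nonneg k1 hb0.le]

lemma aux2 {E nn : ℝ} (he1 : 2.7 < E) (he2 : E < 2.72) (hn : 8 ≤ nn) :
    nn/E - 2 + 1/E ≤ nn/E - E/nn - 1 := by
  have h0 : (0:ℝ) < nn := by linarith
  have he0 : (0:ℝ) < E := by linarith
  have hEn : E/nn ≤ E/8 := by
    rw [div_le_div_iff₀ h0 (by norm_num : (0:ℝ) < 8)]
    nlinarith
  have h8 : E/8 ≤ 0.34 := by
    rw [div_le_iff₀ (by norm_num : (0:ℝ) < 8)]; nlinarith
  have hinv : 1/E ≤ 0.38 := by rw [div_le_iff₀ he0]; nlinarith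
  linarith

lemma tele (a : ℕ) : ∀ d : ℕ,
    Flog (a+d) - Flog a ≤ ∑ m ∈ Finset.Icc (a+1) (a+d), Real.log m := by
  intro d; induction d with
  | zero => simp [Flog]
  | succ d ih =>
    rw [show a + (d+1) = (a+d)+1 by ring,
      Finset.sum_Icc_succ_top (by omega : a+1 ≤ a+d+1)]
    have hstep := F_step (x := ((a:ℝ)+d+1)) (by
      have h1 : (0:ℝ) ≤ (a:ℝ) := Nat.cast_nonneg a
      have h2 : (0:ℝ) ≤ (d:ℝ) := Nat.cast_nonneg d
      linarith)
    simp only [Flog] at *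
    push_cast
    have hc : ((a:ℝ)+d+1) - 1 = (a:ℝ)+d := by ring
    rw [hc] at hstep
    have hg : (a:ℝ) + ((d:ℝ)+1) = (a:ℝ)+(d:ℝ)+1 := by ring
    rw [hg]
    linarith

lemma C4 (n : ℕ) (hn : 8 ≤ n) :
    (n:ℝ)/Real.exp 1 - 2 + 1/Real.exp 1 ≤
      ∑ m ∈ Finset.Icc 1 (n-1), max 0 (1 - Hsum n + Hsum m) := by
  have he1 : (2.7182818283 : ℝ) < Real.exp 1 := Real.exp_one_gt_d9
  have he2 : Real.exp 1 < 2.7182818286 := Real.exp_one_lt_d9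
  have he0 : (0:ℝ) < Real.exp 1 := by linarith
  set E := Real.exp 1 with hE
  have hn8 : (8:ℝ) ≤ n := by exact_mod_cast hn
  set b : ℝ := n / E with hb
  have hb2 : (2:ℝ) < b := by
    rw [hb]; rw [lt_div_iff₀ he0]; nlinarith
  have hb0 : (0:ℝ) < b := by linarith
  set M : ℕ := ⌈b⌉₊ with hM
  have hMge : b ≤ (M:ℝ) := Nat.le_ceil b
  have hMlt : (M:ℝ) < b + 1 := Nat.ceil_lt_add_one (le_of_lt hb0)
  have hM3 : 3 ≤ M := by
    have h : (2:ℝ) < (M:ℝ) := lt_of_lt_of_le hb2 hMge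
    have : 2 < M := by exact_mod_cast h
    omega
  have hMn : M + 1 ≤ n := by
    have h1 : (M:ℝ) + 1 < (n:ℝ) := by
      have : b + 2 ≤ (n:ℝ) := by
        rw [hb]
        rw [div_add' _ _ _ (ne_of_gt he0), div_le_iff₀ he0]
        nlinarith
      linarith
    have h2 : ((M+1:ℕ):ℝ) < (n:ℝ) := by push_cast; linarith
    have : M + 1 < n := by exact_mod_cast h2
    omega
  -- a := M - 1 real
  set a : ℝ := (M:ℝ) - 1 with ha
  have ha2 : (2:ℝ) ≤ a := by
    have : (3:ℝ) ≤ (M:ℝ) := by exact_mod_cast hM3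
    linarith
  have hab : b - 1 ≤ a ∧ a ≤ b := ⟨by linarith, by linarith⟩
  -- Step 1+2 : lower bound the sum by ∑_{m=M}^{n-1} (1 + log m - log n)
  have hsub : Finset.Icc M (n-1) ⊆ Finset.Icc 1 (n-1) := by
    apply Finset.Icc_subset_Icc_left; omega
  have step12 : ∑ m ∈ Finset.Icc M (n-1), (1 + Real.log m - Real.log n)
      ≤ ∑ m ∈ Finset.Icc 1 (n-1), max 0 (1 - Hsum n + Hsum m) := by
    calc ∑ m ∈ Finset.Icc M (n-1), (1 + Real.log m - Real.log n)
        ≤ ∑ m ∈ Finset.Icc M (n-1), max 0 (1 - Hsum n + Hsum m) := by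
          apply Finset.sum_le_sum
          intro m hm
          rw [Finset.mem_Icc] at hm
          have h1m : 1 ≤ m := by omega
          have hmn' : m ≤ n := by omega
          have := Hsum_diff_le_log h1m hmn'
          have : 1 + Real.log m - Real.log n ≤ 1 - Hsum n + Hsum m := by linarith
          exact le_trans this (le_max_right _ _)
      _ ≤ ∑ m ∈ Finset.Icc 1 (n-1), max 0 (1 - Hsum n + Hsum m) := by
          apply Finset.sum_le_sum_of_subset_of_nonneg hsub
          intro m _ _; exact le_max_left _ _
  -- Step 3: rewrite lower sum
  have hcard : (Finset.Icc M (n-1)).card = n - M := by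
    rw [Nat.card_Icc]; omega
  have step3 : ∑ m ∈ Finset.Icc M (n-1), (1 + Real.log m - Real.log n)
      = ((n:ℝ) - M) * (1 - Real.log n) + ∑ m ∈ Finset.Icc M (n-1), Real.log m := by
    have : ∀ m ∈ Finset.Icc M (n-1), (1 + Real.log m - Real.log n)
        = Real.log m + (1 - Real.log n) := by intro m _; ring
    rw [Finset.sum_congr rfl this, Finset.sum_add_distrib, Finset.sum_const, hcard]
    have : ((n - M : ℕ) : ℝ) = (n:ℝ) - M := by
      have : M ≤ n := by omega
      push_cast [this]; ring
    rw [nsmul_eq_mul, this]; ring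
  -- Step 4: telescoping
  have step4 : Flog ((n:ℝ)-1) - Flog a ≤ ∑ m ∈ Finset.Icc M (n-1), Real.log m := by
    have h := tele (M-1) (n-M)
    have e1 : (M-1) + 1 = M := by omega
    have e2 : (M-1) + (n-M) = n-1 := by omega
    rw [e1, e2] at h
    have c1 : ((M-1:ℕ):ℝ) = a := by rw [ha]; push_cast [show 1 ≤ M by omega]; ring
    have c2 : ((M-1:ℕ):ℝ) + ((n-M:ℕ):ℝ) = (n:ℝ) - 1 := by
      push_cast [show 1 ≤ M by omega, show M ≤ n by omega]; ring
    rw [c2, c1] at h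
    exact h
  -- Step 5: numeric endgame
  have hlogb : Real.log b = Real.log n - 1 := by
    rw [hb, Real.log_div (by positivity) (ne_of_gt he0), hE, Real.log_exp]
  have hA : ((n:ℝ)-1) * (Real.log n - Real.log ((n:ℝ)-1)) ≤ 1 := by
    have h0 : (0:ℝ) < (n:ℝ) - 1 := by linarith
    have := log_sub_log_le h0 (show (n:ℝ)-1 ≤ (n:ℝ) by linarith)
    have h2 : ((n:ℝ) - ((n:ℝ)-1)) / ((n:ℝ)-1) = 1/((n:ℝ)-1) := by ring_nf
    have h3 : Real.log n - Real.log ((n:ℝ)-1) ≤ 1/((n:ℝ)-1) := by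
      rw [h2] at this; exact this
    calc ((n:ℝ)-1) * (Real.log n - Real.log ((n:ℝ)-1)) ≤ ((n:ℝ)-1) * (1/((n:ℝ)-1)) :=
          mul_le_mul_of_nonneg_left h3 (le_of_lt h0)
      _ = 1 := by field_simp
  have hB : b - 1/b ≤ a * (Real.log n - Real.log a) := by
    have ha0 : (0:ℝ) < a := by linarith
    have h1 : (b - a)/b ≤ Real.log b - Real.log a := le_log_sub_log ha0 hab.2
    have h2 : 1 + (b-a)/b ≤ Real.log n - Real.log a := by rw [hlogb] at h1; linarith
    have h3 : a * (1 + (b-a)/b) ≤ a * (Real.log n - Real.log a) :=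
      mul_le_mul_of_nonneg_left h2 (le_of_lt ha0)
    have h4 : b - 1/b ≤ a * (1 + (b-a)/b) := aux1 hb0 hab.1 hab.2
    linarith
  -- assemble
  have key : b - 1/b - 1 ≤ ((n:ℝ) - M) * (1 - Real.log n) + (Flog ((n:ℝ)-1) - Flog a) := by
    simp only [Flog]
    have expand : ((n:ℝ) - M) * (1 - Real.log n) + (((n:ℝ)-1) * Real.log ((n:ℝ)-1) - ((n:ℝ)-1)
        - (a * Real.log a - a))
        = -(((n:ℝ)-1) * (Real.log n - Real.log ((n:ℝ)-1))) + a * (Real.log n - Real.log a) := by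
      rw [ha]; ring
    rw [expand]
    linarith
  have hfin : b - 1/b - 1 ≤ ∑ m ∈ Finset.Icc 1 (n-1), max 0 (1 - Hsum n + Hsum m) := by
    calc b - 1/b - 1 ≤ ((n:ℝ) - M) * (1 - Real.log n) + (Flog ((n:ℝ)-1) - Flog a) := key
      _ ≤ ((n:ℝ) - M) * (1 - Real.log n) + ∑ m ∈ Finset.Icc M (n-1), Real.log m := by linarith
      _ = ∑ m ∈ Finset.Icc M (n-1), (1 + Real.log m - Real.log n) := step3.symm
      _ ≤ _ := step12
  have hlast : (n:ℝ)/E - 2 + 1/E ≤ b - 1/b - 1 := by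
    have h1b : 1/b = E/n := by rw [hb]; field_simp
    rw [h1b, hb]
    exact aux2 (by linarith) (by linarith) hn8
  linarith


lemma LP (n : ℕ) (hn : 8 ≤ n) (δ α : ℕ → ℝ)
    (hδ1 : δ 1 = n)
    (hδ0 : ∀ t, 1 ≤ t → t ≤ n → 0 ≤ δ t)
    (hα1 : ∀ t, 1 ≤ t → t ≤ n → α t ≤ 1)
    (hαδ : ∀ t, 1 ≤ t → t ≤ n → α t ≤ δ t)
    (hrec : ∀ t, 1 ≤ t → t ≤ n → δ (t+1) = (1 - 1/((n:ℝ) - t + 1)) * (δ t - α t)) :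
    ∑ t ∈ Finset.Icc 1 n, α t ≤ (1 - 1/Real.exp 1) * n + 2 - 1/Real.exp 1 := by
  have hn1 : 1 ≤ n := by omega
  -- C1 : lower bound on δ
  have hLB : ∀ t, 1 ≤ t → t ≤ n →
      ((n:ℝ)-t+1) * (1 - Hsum n + Hsum (n-t+1)) ≤ δ t := by
    intro t ht
    induction t, ht using Nat.le_induction with
    | base =>
      intro _
      rw [show n-1+1 = n from by omega, hδ1]
      have e2 : 1 - Hsum n + Hsum n = 1 := by ring
      rw [e2, mul_one]
      push_cast
      linarith
    | succ t ht ih =>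
      intro htn
      have ihv := ih (by omega)
      set m : ℕ := n - t - 1 with hm
      have hm1 : n - t = m + 1 := by omega
      have hm2 : n - (t+1) + 1 = m + 1 := by omega
      have hm3 : n - t + 1 = m + 2 := by omega
      have hcast : ((m:ℝ)+1) = (n:ℝ) - t := by
        have : ((n - t : ℕ):ℝ) = (n:ℝ) - (t:ℝ) := by
          push_cast [show t ≤ n by omega]; ring
        rw [← this, hm1]; push_cast; ring
      rw [hm2]
      rw [hm3] at ihv
      have hδt := hrec t (by omega) (by omega)
      have hα := hα1 t (by omega) (by omega)
      -- real abbreviations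
      have hc : (n:ℝ) - t + 1 = (m:ℝ) + 2 := by rw [← hcast]; ring
      rw [hc] at hδt ihv
      have hgoal : ((n:ℝ) - ((t:ℝ)+1) + 1) = (m:ℝ) + 1 := by linarith [hcast]
      push_cast
      rw [hgoal]
      -- identity
      have hfac : (0:ℝ) ≤ 1 - 1/((m:ℝ)+2) := by
        have h1 : (0:ℝ) < (m:ℝ)+2 := by positivity
        have : 1/((m:ℝ)+2) ≤ 1 := by
          rw [div_le_one h1]; linarith
        linarith
      have hmono : ((m:ℝ)+2) * (1 - Hsum n + Hsum (m+2)) - 1 ≤ δ t - α t := by linarith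
      have hid : (1 - 1/((m:ℝ)+2)) * (((m:ℝ)+2) * (1 - Hsum n + Hsum (m+2)) - 1)
          = ((m:ℝ)+1) * (1 - Hsum n + Hsum (m+1)) := by
        rw [show m + 2 = (m+1)+1 from rfl, Hsum_succ (m+1)]
        have h1 : ((m:ℝ)+1+1) ≠ 0 := by positivity
        push_cast
        field_simp
        ring
      calc ((m:ℝ)+1) * (1 - Hsum n + Hsum (m+1))
          = (1 - 1/((m:ℝ)+2)) * (((m:ℝ)+2) * (1 - Hsum n + Hsum (m+2)) - 1) := hid.symm
        _ ≤ (1 - 1/((m:ℝ)+2)) * (δ t - α t) := mul_le_mul_of_nonneg_left hmono hfac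
        _ = δ (t+1) := hδt.symm
  -- C2 : telescoping identity
  have key : ∀ k, k ≤ n-1 →
      ∑ t ∈ Finset.Icc 1 k, α t + δ (k+1)
        + ∑ t ∈ Finset.Icc 2 (k+1), δ t / ((n:ℝ)-t+1) = n := by
    intro k
    induction k with
    | zero => intro _; simp [hδ1]
    | succ k ih =>
      intro hk
      have ihv := ih (by omega)
      rw [Finset.sum_Icc_succ_top (by omega : 1 ≤ k+1),
        show k+1+1 = k+2 from rfl,
        Finset.sum_Icc_succ_top (by omega : 2 ≤ k+2),
        show k+1+1 = k+2 from rfl]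
      have hrk := hrec (k+1) (by omega) (by omega)
      push_cast at hrk
      have hc2 : (2:ℝ) ≤ (n:ℝ) - ((k:ℝ)+1) + 1 := by
        have : ((k+2:ℕ):ℝ) ≤ (n:ℝ) := by exact_mod_cast (show k+2 ≤ n by omega)
        push_cast at this; linarith
      set cr : ℝ := (n:ℝ) - ((k:ℝ)+1) + 1 with hcr
      have hcrn : (n:ℝ) - ((k:ℝ)+2) + 1 = cr - 1 := by rw [hcr]; ring
      have hcr0 : cr ≠ 0 := by intro h; rw [h] at hc2; norm_num at hc2
      have hcr1 : cr - 1 ≠ 0 := by intro h; nlinarith [hc2]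
      have hfac : (1 - 1/cr) * cr = cr - 1 := by field_simp
      have hmul : δ (k+2) * cr = (cr - 1) * (δ (k+1) - α (k+1)) := by
        rw [show k + 2 = (k+1)+1 from rfl, hrk]
        linear_combination (δ (k+1) - α (k+1)) * hfac
      have heq : α (k+1) + δ (k+2) + δ (k+2) / (cr - 1) = δ (k+1) := by
        field_simp
        linear_combination hmul
      push_cast at ihv ⊢
      rw [hcrn]
      linarith [heq, ihv]
  -- S bound
  have hS : ∑ t ∈ Finset.Icc 1 n, α t
      ≤ (n:ℝ) - ∑ t ∈ Finset.Icc 2 n, δ t / ((n:ℝ)-t+1) := by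
    have hk := key (n-1) (le_refl _)
    rw [show n-1+1 = n from by omega] at hk
    have e : ∑ t ∈ Finset.Icc 1 n, α t = ∑ t ∈ Finset.Icc 1 (n-1), α t + α n := by
      have h : n = (n-1)+1 := by omega
      conv_lhs => rw [h]
      rw [Finset.sum_Icc_succ_top (by omega : 1 ≤ (n-1)+1), ← h]
    have hαn := hαδ n (by omega) (le_refl _)
    rw [e]
    linarith [hk, hαn]
  -- C3 : pointwise bound and reindex
  have hpt : ∀ t ∈ Finset.Icc 2 n,
      max 0 (1 - Hsum n + Hsum (n-t+1)) ≤ δ t / ((n:ℝ)-t+1) := by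
    intro t htm
    rw [Finset.mem_Icc] at htm
    have hc : (0:ℝ) < (n:ℝ)-t+1 := by
      have : ((t:ℕ):ℝ) ≤ (n:ℝ) := by exact_mod_cast htm.2
      linarith
    apply max_le
    · exact div_nonneg (hδ0 t (by omega) htm.2) hc.le
    · rw [le_div_iff₀ hc]
      calc (1 - Hsum n + Hsum (n-t+1)) * ((n:ℝ)-t+1)
          = ((n:ℝ)-t+1) * (1 - Hsum n + Hsum (n-t+1)) := by ring
        _ ≤ δ t := hLB t (by omega) htm.2
  have hmono2 : ∑ t ∈ Finset.Icc 2 n, max 0 (1 - Hsum n + Hsum (n-t+1))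
      ≤ ∑ t ∈ Finset.Icc 2 n, δ t / ((n:ℝ)-t+1) := Finset.sum_le_sum hpt
  have hre : ∑ t ∈ Finset.Icc 2 n, max 0 (1 - Hsum n + Hsum (n-t+1))
      = ∑ m ∈ Finset.Icc 1 (n-1), max 0 (1 - Hsum n + Hsum m) := by
    apply Finset.sum_nbij' (i := fun t => n - t + 1) (j := fun m => n - m + 1)
    · intro a ha; rw [Finset.mem_Icc] at *; omega
    · intro a ha; rw [Finset.mem_Icc] at *; omega
    · intro a ha; rw [Finset.mem_Icc] at ha; omega
    · intro a ha; rw [Finset.mem_Icc] at ha; omega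
    · intro a ha; rfl
  have hC4 := C4 n hn
  have hfinal : ∑ t ∈ Finset.Icc 1 n, α t ≤ (n:ℝ) - ((n:ℝ)/Real.exp 1 - 2 + 1/Real.exp 1) := by
    rw [hre] at hmono2
    linarith [hS, hmono2, hC4]
  have heqf : (n:ℝ) - ((n:ℝ)/Real.exp 1 - 2 + 1/Real.exp 1)
      = (1 - 1/Real.exp 1) * n + 2 - 1/Real.exp 1 := by
    have hE : Real.exp 1 ≠ 0 := (Real.exp_pos 1).ne'
    field_simp
    ring
  linarith [hfinal, heqf.ge, heqf.le]


section Meas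
variable {Ω : Type*} [MeasurableSpace Ω] (μ : MeasureTheory.Measure Ω)
  [MeasureTheory.IsProbabilityMeasure μ]

lemma intbdd (f : Ω → ℕ) (hf : Measurable f) (N : ℕ) (hN : ∀ ω, f ω ≤ N) :
    Integrable (fun ω => (f ω : ℝ)) μ := by
  apply Integrable.mono' (integrable_const (N:ℝ))
  · exact (measurable_from_nat.comp hf).aestronglyMeasurable
  · filter_upwards with ω
    rw [Real.norm_eq_abs, abs_of_nonneg (by positivity)]
    exact_mod_cast hN ω

lemma rep (f : Ω → ℕ) (hf : Measurable f) (N : ℕ) (hN : ∀ ω, f ω ≤ N) :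
    ∫ ω, (f ω : ℝ) ∂μ
      = ∑ k ∈ Finset.range (N+1), (k:ℝ) * (μ {ω | f ω = k}).toReal := by
  have hms : ∀ k, MeasurableSet {ω | f ω = k} := fun k => hf (measurableSet_singleton k)
  have hpt : ∀ ω, (f ω : ℝ)
      = ∑ k ∈ Finset.range (N+1), Set.indicator {ω' | f ω' = k} (fun _ => (k:ℝ)) ω := by
    intro ω
    have hmem : f ω ∈ Finset.range (N+1) := Finset.mem_range.2 (Nat.lt_succ_of_le (hN ω))
    rw [Finset.sum_eq_single_of_mem (f ω) hmem
      (fun b _ hb => Set.indicator_of_notMem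
        (fun (h : ω ∈ {ω' | f ω' = b}) => hb (Eq.symm h)) (fun _ => (b:ℝ)))]
    exact (Set.indicator_of_mem (show ω ∈ {ω' | f ω' = f ω} from rfl)
      (fun _ => ((f ω : ℕ):ℝ))).symm
  calc ∫ ω, (f ω : ℝ) ∂μ
      = ∫ ω, ∑ k ∈ Finset.range (N+1),
          Set.indicator {ω' | f ω' = k} (fun _ => (k:ℝ)) ω ∂μ :=
        integral_congr_ae (Filter.Eventually.of_forall hpt)
    _ = ∑ k ∈ Finset.range (N+1),
          ∫ ω, Set.indicator {ω' | f ω' = k} (fun _ => (k:ℝ)) ω ∂μ :=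
        integral_finset_sum _ (fun k _ => (integrable_const (k:ℝ)).indicator (hms k))
    _ = ∑ k ∈ Finset.range (N+1), (k:ℝ) * (μ {ω | f ω = k}).toReal := by
        refine Finset.sum_congr rfl fun k _ => ?_
        rw [integral_indicator_const _ (hms k), smul_eq_mul, mul_comm, Measure.real_def]

lemma meas_decomp (f : Ω → ℕ) (hf : Measurable f) (N : ℕ) (hN : ∀ ω, f ω ≤ N) :
    (μ {ω | 1 ≤ f ω}).toReal = ∑ k ∈ Finset.Icc 1 N, (μ {ω | f ω = k}).toReal := by
  have hms : ∀ k, MeasurableSet {ω | f ω = k} := fun k => hf (measurableSet_singleton k)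
  have hset : {ω | 1 ≤ f ω} = ⋃ k ∈ Finset.Icc 1 N, {ω | f ω = k} := by
    ext ω
    simp only [Set.mem_setOf_eq, Set.mem_iUnion, Finset.mem_Icc, exists_prop]
    constructor
    · intro h; exact ⟨f ω, ⟨h, hN ω⟩, rfl⟩
    · rintro ⟨k, ⟨h1, _⟩, hk⟩; omega
  rw [hset, measure_biUnion_finset ?_ (fun k _ => hms k)]
  · exact ENNReal.toReal_sum (fun k _ => measure_ne_top μ _)
  · intro a _ b _ hab
    simp only [Function.onFun, Set.disjoint_left]
    intro ω h1 h2
    exact hab ((h1 : f ω = a).symm.trans h2)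

lemma recursion (n : ℕ) (Y : ℕ → Ω → ℕ)
    (hmeas : ∀ t, Measurable (Y t))
    (hstep : ∀ ω, ∀ t, 1 ≤ t → t ≤ n →
      (1 ≤ Y t ω → Y (t + 1) ω = Y t ω - 1 ∨ Y (t + 1) ω = Y t ω - 2) ∧
      (Y t ω = 0 → Y (t + 1) ω = 0))
    (hprob2 : ∀ t y, 1 ≤ t → t ≤ n → 2 ≤ y →
      μ {ω | Y t ω = y ∧ Y (t + 1) ω = y - 2} =
        ENNReal.ofReal (((y : ℝ) - 1) / ((n : ℝ) - t + 1)) * μ {ω | Y t ω = y})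
    (hprob1 : ∀ t y, 1 ≤ t → t ≤ n → 1 ≤ y →
      μ {ω | Y t ω = y ∧ Y (t + 1) ω = y - 1} =
        ENNReal.ofReal (1 - ((y : ℝ) - 1) / ((n : ℝ) - t + 1)) * μ {ω | Y t ω = y})
    (t : ℕ) (ht1 : 1 ≤ t) (htn : t ≤ n)
    (hbt : ∀ ω, Y t ω ≤ n - t + 1) (hbt1 : ∀ ω, Y (t+1) ω ≤ n) :
    ∫ ω, (Y (t+1) ω : ℝ) ∂μ
      = (1 - 1/((n:ℝ) - t + 1)) *
        ((∫ ω, (Y t ω : ℝ) ∂μ) - (μ {ω | 1 ≤ Y t ω}).toReal) := by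
  have htn' : (t:ℝ) ≤ n := by exact_mod_cast htn
  have hc1 : (1:ℝ) ≤ (n:ℝ) - t + 1 := by linarith
  have hc0 : ((n:ℝ) - t + 1) ≠ 0 := by linarith
  have hms : ∀ s k, MeasurableSet {ω | Y s ω = k} :=
    fun s k => hmeas s (measurableSet_singleton k)
  have hbtn : ∀ ω, Y t ω ≤ n := fun ω => le_trans (hbt ω) (by omega)
  have hpt : ∀ ω, (Y (t+1) ω : ℝ) = ∑ y ∈ Finset.range (n+1),
      Set.indicator {ω' | Y t ω' = y} (fun ω' => (Y (t+1) ω' : ℝ)) ω := by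
    intro ω
    have hmem : Y t ω ∈ Finset.range (n+1) := Finset.mem_range.2 (Nat.lt_succ_of_le (hbtn ω))
    rw [Finset.sum_eq_single_of_mem (Y t ω) hmem
      (fun b _ hb => Set.indicator_of_notMem
        (fun (h : ω ∈ {ω' | Y t ω' = b}) => hb (Eq.symm h))
        (fun ω' => ((Y (t+1) ω' : ℕ):ℝ)))]
    exact (Set.indicator_of_mem (show ω ∈ {ω' | Y t ω' = Y t ω} from rfl)
      (fun ω' => ((Y (t+1) ω' : ℕ):ℝ))).symm
  have hint : ∀ y : ℕ, Integrable
      (fun ω => Set.indicator {ω' | Y t ω' = y} (fun ω' => (Y (t+1) ω' : ℝ)) ω) μ :=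
    fun y => (intbdd μ (Y (t+1)) (hmeas _) n hbt1).indicator (hms t y)
  have hI : ∀ y ∈ Finset.range (n+1),
      ∫ ω, Set.indicator {ω' | Y t ω' = y} (fun ω' => (Y (t+1) ω' : ℝ)) ω ∂μ
        = (1 - 1/((n:ℝ) - t + 1)) *
            (((y:ℝ) - (if 1 ≤ y then 1 else 0)) * (μ {ω | Y t ω = y}).toReal) := by
    intro y _
    by_cases hy1 : y ≤ 1
    · have hzero : ∀ ω,
          Set.indicator {ω' | Y t ω' = y} (fun ω' => (Y (t+1) ω' : ℝ)) ω = 0 := by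
        intro ω
        by_cases hmem : Y t ω = y
        · rw [Set.indicator_of_mem (show ω ∈ {ω' | Y t ω' = y} from hmem)]
          have hz : Y (t+1) ω = 0 := by
            rcases Nat.lt_or_ge (Y t ω) 1 with h0 | h1
            · exact (hstep ω t ht1 htn).2 (by omega)
            · rcases (hstep ω t ht1 htn).1 h1 with h | h <;> omega
          simp [hz]
        · exact Set.indicator_of_notMem (show ω ∉ {ω' | Y t ω' = y} from hmem) _
      rw [integral_congr_ae (Filter.Eventually.of_forall hzero), integral_zero]
      interval_cases y <;> simp
    · push_neg at hy1
      have hy2 : 2 ≤ y := hy1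
      by_cases hym : y ≤ n - t + 1
      · have hmA1 : MeasurableSet {ω | Y t ω = y ∧ Y (t+1) ω = y - 1} :=
          (hms t y).inter (hms (t+1) (y-1))
        have hmA2 : MeasurableSet {ω | Y t ω = y ∧ Y (t+1) ω = y - 2} :=
          (hms t y).inter (hms (t+1) (y-2))
        have hsplit : ∀ ω,
            Set.indicator {ω' | Y t ω' = y} (fun ω' => (Y (t+1) ω' : ℝ)) ω
            = Set.indicator {ω' | Y t ω' = y ∧ Y (t+1) ω' = y - 1}
                (fun _ => ((y-1 : ℕ):ℝ)) ω
              + Set.indicator {ω' | Y t ω' = y ∧ Y (t+1) ω' = y - 2}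
                (fun _ => ((y-2 : ℕ):ℝ)) ω := by
          intro ω
          by_cases hmem : Y t ω = y
          · rcases (hstep ω t ht1 htn).1 (by omega) with h | h
            · have m1 : ω ∈ {ω' | Y t ω' = y ∧ Y (t+1) ω' = y - 1} := ⟨hmem, by omega⟩
              have m2 : ω ∉ {ω' | Y t ω' = y ∧ Y (t+1) ω' = y - 2} := by
                intro hh
                have h2 := hh.2
                omega
              rw [Set.indicator_of_mem (show ω ∈ {ω' | Y t ω' = y} from hmem),
                Set.indicator_of_mem m1, Set.indicator_of_notMem m2]
              have hv : Y (t+1) ω = y - 1 := by omega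
              rw [hv]; ring
            · have m2 : ω ∈ {ω' | Y t ω' = y ∧ Y (t+1) ω' = y - 2} := ⟨hmem, by omega⟩
              have m1 : ω ∉ {ω' | Y t ω' = y ∧ Y (t+1) ω' = y - 1} := by
                intro hh
                have h2 := hh.2
                omega
              rw [Set.indicator_of_mem (show ω ∈ {ω' | Y t ω' = y} from hmem),
                Set.indicator_of_mem m2, Set.indicator_of_notMem m1]
              have hv : Y (t+1) ω = y - 2 := by omega
              rw [hv]; ring
          · rw [Set.indicator_of_notMem (show ω ∉ {ω' | Y t ω' = y} from hmem),
              Set.indicator_of_notMem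
                (fun (hh : ω ∈ {ω' | Y t ω' = y ∧ Y (t+1) ω' = y - 1}) => hmem hh.1),
              Set.indicator_of_notMem
                (fun (hh : ω ∈ {ω' | Y t ω' = y ∧ Y (t+1) ω' = y - 2}) => hmem hh.1)]
            ring
        rw [integral_congr_ae (Filter.Eventually.of_forall hsplit),
          integral_add ((integrable_const _).indicator hmA1)
            ((integrable_const _).indicator hmA2),
          integral_indicator_const _ hmA1, integral_indicator_const _ hmA2,
          smul_eq_mul, smul_eq_mul, Measure.real_def, Measure.real_def,
          hprob1 t y ht1 htn (by omega), hprob2 t y ht1 htn hy2]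
        have hyc : (y:ℝ) ≤ (n:ℝ) - t + 1 := by
          have h := hym
          have : ((y:ℕ):ℝ) ≤ ((n - t + 1 : ℕ):ℝ) := by exact_mod_cast h
          have hcast : ((n - t + 1 : ℕ):ℝ) = (n:ℝ) - t + 1 := by
            push_cast [htn]; ring
          linarith [hcast ▸ this]
        have hy1R : (1:ℝ) ≤ (y:ℝ) := by exact_mod_cast (by omega : 1 ≤ y)
        have h1nn : 0 ≤ 1 - ((y:ℝ)-1)/((n:ℝ) - t + 1) := by
          rw [sub_nonneg, div_le_one (by linarith)]
          linarith
        have h2nn : 0 ≤ ((y:ℝ)-1)/((n:ℝ) - t + 1) := by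
          apply div_nonneg <;> linarith
        rw [ENNReal.toReal_mul, ENNReal.toReal_mul,
          ENNReal.toReal_ofReal h1nn, ENNReal.toReal_ofReal h2nn,
          if_pos (by omega : 1 ≤ y)]
        have e1 : ((y-1:ℕ):ℝ) = (y:ℝ) - 1 := by push_cast [show 1 ≤ y by omega]; ring
        have e2 : ((y-2:ℕ):ℝ) = (y:ℝ) - 2 := by push_cast [hy2]; ring
        rw [e1, e2]
        field_simp
        ring
      · have hempty : {ω | Y t ω = y} = ∅ := by
          ext ω
          simp only [Set.mem_setOf_eq, Set.mem_empty_iff_false, iff_false]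
          intro h
          exact hym (h ▸ hbt ω)
        have hzero : ∀ ω,
            Set.indicator {ω' | Y t ω' = y} (fun ω' => (Y (t+1) ω' : ℝ)) ω = 0 := by
          intro ω
          apply Set.indicator_of_notMem
          rw [hempty]
          exact Set.notMem_empty ω
        rw [integral_congr_ae (Filter.Eventually.of_forall hzero), integral_zero, hempty]
        simp
  calc ∫ ω, (Y (t+1) ω : ℝ) ∂μ
      = ∫ ω, ∑ y ∈ Finset.range (n+1),
          Set.indicator {ω' | Y t ω' = y} (fun ω' => (Y (t+1) ω' : ℝ)) ω ∂μ :=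
        integral_congr_ae (Filter.Eventually.of_forall hpt)
    _ = ∑ y ∈ Finset.range (n+1),
          ∫ ω, Set.indicator {ω' | Y t ω' = y} (fun ω' => (Y (t+1) ω' : ℝ)) ω ∂μ :=
        integral_finset_sum _ (fun y _ => hint y)
    _ = ∑ y ∈ Finset.range (n+1), (1 - 1/((n:ℝ) - t + 1)) *
          (((y:ℝ) - (if 1 ≤ y then 1 else 0)) * (μ {ω | Y t ω = y}).toReal) :=
        Finset.sum_congr rfl hI
    _ = (1 - 1/((n:ℝ) - t + 1)) *
        ((∑ y ∈ Finset.range (n+1), (y:ℝ) * (μ {ω | Y t ω = y}).toReal)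
          - (∑ y ∈ Finset.range (n+1),
              (if 1 ≤ y then (1:ℝ) else 0) * (μ {ω | Y t ω = y}).toReal)) := by
        rw [← Finset.mul_sum]
        congr 1
        rw [← Finset.sum_sub_distrib]
        exact Finset.sum_congr rfl (fun y _ => by ring)
    _ = (1 - 1/((n:ℝ) - t + 1)) *
        ((∫ ω, (Y t ω : ℝ) ∂μ) - (μ {ω | 1 ≤ Y t ω}).toReal) := by
        congr 1
        rw [rep μ (Y t) (hmeas t) n hbtn, meas_decomp μ (Y t) (hmeas t) n hbtn]
        congr 1
        have hins : Finset.range (n+1) = insert 0 (Finset.Icc 1 n) := by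
          ext x
          simp only [Finset.mem_range, Finset.mem_insert, Finset.mem_Icc]
          omega
        rw [hins, Finset.sum_insert (by simp)]
        simp only [if_neg (by omega : ¬ (1 ≤ 0)), zero_mul, zero_add]
        exact Finset.sum_congr rfl (fun y hy => by
          rw [Finset.mem_Icc] at hy
          rw [if_pos hy.1, one_mul])

end Meas



/-- The expected matching size of RGA on the triangular instance, i.e. E[T]
    for the death process, is at most ⌈(1-1/e)·n + 2 - 1/e⌉. -/
theorem stmt_17 {Ω : Type*} [MeasurableSpace Ω] (μ : MeasureTheory.Measure Ω)
    [MeasureTheory.IsProbabilityMeasure μ]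
    (n : ℕ) (hn : 1 ≤ n) (Y : ℕ → Ω → ℕ)
    (hmeas : ∀ t, Measurable (Y t))
    (hY1 : ∀ ω, Y 1 ω = n)
    (hstep : ∀ ω, ∀ t, 1 ≤ t → t ≤ n →
      (1 ≤ Y t ω → Y (t + 1) ω = Y t ω - 1 ∨ Y (t + 1) ω = Y t ω - 2) ∧
      (Y t ω = 0 → Y (t + 1) ω = 0))
    (hprob2 : ∀ t y, 1 ≤ t → t ≤ n → 2 ≤ y →
      μ {ω | Y t ω = y ∧ Y (t + 1) ω = y - 2} =
        ENNReal.ofReal (((y : ℝ) - 1) / ((n : ℝ) - t + 1)) * μ {ω | Y t ω = y})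
    (hprob1 : ∀ t y, 1 ≤ t → t ≤ n → 1 ≤ y →
      μ {ω | Y t ω = y ∧ Y (t + 1) ω = y - 1} =
        ENNReal.ofReal (1 - ((y : ℝ) - 1) / ((n : ℝ) - t + 1)) * μ {ω | Y t ω = y})
    (T : Ω → ℕ) (hT : ∀ ω, T ω = sInf {t | 1 ≤ t ∧ Y (t + 1) ω = 0}) :
    (∫ ω, ((T ω : ℝ)) ∂μ) ≤
      (⌈(1 - 1 / Real.exp 1) * n + 2 - 1 / Real.exp 1⌉₊ : ℝ) := by
  -- deterministic bound on Y
  have hb : ∀ s, 1 ≤ s → s ≤ n+1 → ∀ ω, Y s ω + s ≤ n + 1 := by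
    intro s hs1
    induction s, hs1 using Nat.le_induction with
    | base => intro _ ω; rw [hY1 ω]
    | succ s hs ih =>
      intro hsn ω
      have hYs := ih (by omega) ω
      rcases Nat.lt_or_ge (Y s ω) 1 with h0 | h1
      · have := (hstep ω s hs (by omega)).2 (by omega); omega
      · rcases (hstep ω s hs (by omega)).1 h1 with h | h <;> omega
  -- pointwise representation of T
  have hT1n : ∀ ω, (T ω : ℝ) = ∑ t ∈ Finset.Icc 1 n,
      Set.indicator {ω' | 1 ≤ Y t ω'} (fun _ => (1:ℝ)) ω := by
    intro ω
    have hYn1 : Y (n+1) ω = 0 := by have := hb (n+1) (by omega) (by omega) ω; omega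
    have hSn : n ∈ {t | 1 ≤ t ∧ Y (t+1) ω = 0} := ⟨hn, hYn1⟩
    have hTle : T ω ≤ n := by rw [hT ω]; exact Nat.sInf_le hSn
    have hTmem : T ω ∈ {t | 1 ≤ t ∧ Y (t+1) ω = 0} := by
      rw [hT ω]; exact Nat.sInf_mem ⟨n, hSn⟩
    have hT1 : 1 ≤ T ω := hTmem.1
    have hfwd : ∀ t, 1 ≤ t → t ≤ T ω → 1 ≤ Y t ω := by
      intro t ht1 htT
      rcases Nat.eq_or_lt_of_le ht1 with h1 | h2
      · rw [← h1, hY1 ω]; exact hn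
      · have hs : t - 1 < T ω := by omega
        have hnot : t - 1 ∉ {t | 1 ≤ t ∧ Y (t+1) ω = 0} := by
          rw [hT ω] at hs; exact Nat.notMem_of_lt_sInf hs
        by_contra hY0
        exact hnot ⟨by omega, by rw [show t - 1 + 1 = t from by omega]; omega⟩
    have hbwd : ∀ t, T ω + 1 ≤ t → t ≤ n + 1 → Y t ω = 0 := by
      intro t htT
      induction t, htT using Nat.le_induction with
      | base => intro _; exact hTmem.2
      | succ t ht ih =>
        intro htn
        exact (hstep ω t (by omega) (by omega)).2 (ih (by omega))
    have hiff : ∀ t, 1 ≤ t → t ≤ n → (1 ≤ Y t ω ↔ t ≤ T ω) := by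
      intro t ht1 htn
      constructor
      · intro hY
        by_contra hlt
        push_neg at hlt
        have := hbwd t (by omega) (by omega)
        omega
      · exact hfwd t ht1
    have hfilter : (Finset.Icc 1 n).filter (fun t => t ≤ T ω) = Finset.Icc 1 (T ω) := by
      ext x
      simp only [Finset.mem_filter, Finset.mem_Icc]
      omega
    calc (T ω : ℝ)
        = (((Finset.Icc 1 n).filter (fun t => t ≤ T ω)).card : ℝ) := by
          rw [hfilter, Nat.card_Icc, Nat.add_sub_cancel]
      _ = ∑ t ∈ Finset.Icc 1 n, if t ≤ T ω then (1:ℝ) else 0 :=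
          (Finset.sum_boole _ _).symm
      _ = ∑ t ∈ Finset.Icc 1 n, Set.indicator {ω' | 1 ≤ Y t ω'} (fun _ => (1:ℝ)) ω := by
          refine Finset.sum_congr rfl fun t htm => ?_
          rw [Finset.mem_Icc] at htm
          by_cases hc : t ≤ T ω
          · rw [if_pos hc, Set.indicator_of_mem
              (show ω ∈ {ω' | 1 ≤ Y t ω'} from (hiff t htm.1 htm.2).2 hc) (fun _ => (1:ℝ))]
          · rw [if_neg hc, Set.indicator_of_notMem
              (show ω ∉ {ω' | 1 ≤ Y t ω'} from fun hY => hc ((hiff t htm.1 htm.2).1 hY))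
              (fun _ => (1:ℝ))]
  have hmge : ∀ t : ℕ, MeasurableSet {ω | 1 ≤ Y t ω} :=
    fun t => hmeas t (show MeasurableSet {m : ℕ | 1 ≤ m} from trivial)
  have hET : ∫ ω, (T ω : ℝ) ∂μ = ∑ t ∈ Finset.Icc 1 n, (μ {ω | 1 ≤ Y t ω}).toReal := by
    rw [integral_congr_ae (Filter.Eventually.of_forall hT1n),
      integral_finset_sum _ (fun t _ => (integrable_const (1:ℝ)).indicator (hmge t))]
    refine Finset.sum_congr rfl fun t _ => ?_
    rw [integral_indicator_const _ (hmge t), smul_eq_mul, mul_one, Measure.real_def]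
  have hα1 : ∀ t : ℕ, (μ {ω | 1 ≤ Y t ω}).toReal ≤ 1 := by
    intro t
    calc (μ {ω | 1 ≤ Y t ω}).toReal ≤ (1:ℝ≥0∞).toReal :=
        ENNReal.toReal_mono (by norm_num) prob_le_one
      _ = 1 := by simp
  rw [hET]
  have he1 : (2.7182818283 : ℝ) < Real.exp 1 := Real.exp_one_gt_d9
  have hepos : (0:ℝ) < Real.exp 1 := Real.exp_pos 1
  rcases le_or_gt n 7 with hn7 | hn8
  · -- small n
    have hsum : ∑ t ∈ Finset.Icc 1 n, (μ {ω | 1 ≤ Y t ω}).toReal ≤ (n:ℝ) := by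
      calc ∑ t ∈ Finset.Icc 1 n, (μ {ω | 1 ≤ Y t ω}).toReal
          ≤ ∑ t ∈ Finset.Icc 1 n, (1:ℝ) := Finset.sum_le_sum (fun t _ => hα1 t)
        _ = ((Finset.Icc 1 n).card : ℝ) := by rw [Finset.sum_const]; simp
        _ = (n:ℝ) := by rw [Nat.card_Icc, Nat.add_sub_cancel]
    have hlt : ((n-1:ℕ):ℝ) < (1 - 1/Real.exp 1)*n + 2 - 1/Real.exp 1 := by
      have hc : ((n-1:ℕ):ℝ) = (n:ℝ) - 1 := by push_cast [hn]; ring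
      rw [hc]
      have hn7R : (n:ℝ) ≤ 7 := by exact_mod_cast hn7
      have hkey : ((n:ℝ)+1)/Real.exp 1 < 3 := by
        rw [div_lt_iff₀ hepos]
        nlinarith
      have hexp : (1 - 1/Real.exp 1)*(n:ℝ) + 2 - 1/Real.exp 1
          = (n:ℝ) + 2 - ((n:ℝ)+1)/Real.exp 1 := by
        field_simp
        ring
      rw [hexp]
      linarith
    have hceil : n ≤ ⌈(1 - 1/Real.exp 1)*(n:ℝ) + 2 - 1/Real.exp 1⌉₊ := by
      have := Nat.lt_ceil.2 hlt
      omega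
    have hceilR : (n:ℝ) ≤ (⌈(1 - 1/Real.exp 1)*(n:ℝ) + 2 - 1/Real.exp 1⌉₊ : ℝ) := by
      exact_mod_cast hceil
    linarith
  · -- large n
    have hlp := LP n (by omega)
      (fun t => ∫ ω, (Y t ω : ℝ) ∂μ)
      (fun t => (μ {ω | 1 ≤ Y t ω}).toReal)
      (by
        show (∫ ω, (Y 1 ω : ℝ) ∂μ) = ((n:ℕ):ℝ)
        rw [integral_congr_ae (Filter.Eventually.of_forall
          (fun ω => by rw [hY1 ω] : ∀ ω, ((Y 1 ω : ℕ):ℝ) = ((n:ℕ):ℝ)))]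
        simp)
      (fun t _ _ => integral_nonneg (fun ω => Nat.cast_nonneg _))
      (fun t _ _ => hα1 t)
      (by
        intro t ht1 htn
        show (μ {ω | 1 ≤ Y t ω}).toReal ≤ ∫ ω, (Y t ω : ℝ) ∂μ
        have hbt : ∀ ω, Y t ω ≤ n := fun ω => by have := hb t ht1 (by omega) ω; omega
        rw [meas_decomp μ (Y t) (hmeas t) n hbt, rep μ (Y t) (hmeas t) n hbt]
        calc ∑ k ∈ Finset.Icc 1 n, (μ {ω | Y t ω = k}).toReal
            ≤ ∑ k ∈ Finset.Icc 1 n, (k:ℝ) * (μ {ω | Y t ω = k}).toReal := by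
              apply Finset.sum_le_sum
              intro k hk
              rw [Finset.mem_Icc] at hk
              have h1k : (1:ℝ) ≤ k := by exact_mod_cast hk.1
              nlinarith [ENNReal.toReal_nonneg (a := μ {ω | Y t ω = k})]
          _ ≤ ∑ k ∈ Finset.range (n+1), (k:ℝ) * (μ {ω | Y t ω = k}).toReal := by
              apply Finset.sum_le_sum_of_subset_of_nonneg
              · intro x hx
                rw [Finset.mem_Icc] at hx
                rw [Finset.mem_range]
                omega
              · exact fun k _ _ => mul_nonneg (Nat.cast_nonneg k) ENNReal.toReal_nonneg)
      (by
        intro t ht1 htn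
        show (∫ ω, (Y (t+1) ω : ℝ) ∂μ)
          = (1 - 1/((n:ℝ) - t + 1)) * ((∫ ω, (Y t ω : ℝ) ∂μ) - (μ {ω | 1 ≤ Y t ω}).toReal)
        exact recursion μ n Y hmeas hstep hprob2 hprob1 t ht1 htn
          (fun ω => by have := hb t ht1 (by omega) ω; omega)
          (fun ω => by have := hb (t+1) (by omega) (by omega) ω; omega))
    calc ∑ t ∈ Finset.Icc 1 n, (μ {ω | 1 ≤ Y t ω}).toReal
        ≤ (1 - 1/Real.exp 1) * n + 2 - 1/Real.exp 1 := hlp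
      _ ≤ (⌈(1 - 1/Real.exp 1)*(n:ℝ) + 2 - 1/Real.exp 1⌉₊ : ℝ) := Nat.le_ceil _
end
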